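/- arXiv:1804.08808 — 6 statements merged into one kernel-verified Lean document; each statement's English description precedes it below -/
import Mathlib

section
/- Let G be an out-hyperstar with k arcs, i.e., an (r,s)-directed hypergraph in which every two arcs share exactly one common vertex (the center) lying in the tail of each arc, and otherwise all arcs are vertex-disjoint. If r/p + s/q < 1, then λ_{p,q}(G) = k^{1−((r−1)/p+s/q)} / (r^{r/p} s^{s/q}). If r/p + s/q = 1, then λ_{p,q}(G) = k^{1/p} / (r^{r/p} s^{s/q}). -/
structure DirectedHypergraph (m n N r s : ℕ) where
  tail : Fin N → Finset (Fin m)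
  head : Fin N → Finset (Fin n)
  tail_card : ∀ e, (tail e).card = r
  head_card : ∀ e, (head e).card = s

namespace DirectedHypergraph

noncomputable def pnorm {k : ℕ} (p : ℝ) (x : Fin k → ℝ) : ℝ :=
  (∑ i, |x i| ^ p) ^ (1 / p)

variable {m n N r s : ℕ}

noncomputable def polyForm (G : DirectedHypergraph m n N r s)
    (x : Fin m → ℝ) (y : Fin n → ℝ) : ℝ :=
  ∑ e, (∏ u ∈ G.tail e, x u) * ∏ v ∈ G.head e, y v

noncomputable def specRad (G : DirectedHypergraph m n N r s) (p q : ℝ) : ℝ :=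
  sSup {z | ∃ x y, pnorm p x = 1 ∧ pnorm q y = 1 ∧ z = G.polyForm x y}

def outDeg (G : DirectedHypergraph m n N r s) (u : Fin m) : ℕ :=
  (Finset.univ.filter fun e => u ∈ G.tail e).card

def inDeg (G : DirectedHypergraph m n N r s) (v : Fin n) : ℕ :=
  (Finset.univ.filter fun e => v ∈ G.head e).card

end DirectedHypergraph

open Finset

lemma holder2 {ι : Type*} (t : Finset ι) (g : ι → ℝ) (hg : ∀ i ∈ t, 0 ≤ g i)
    {b : ℝ} (hb : 0 < b) (hb1 : b ≤ 1) :
    ∑ i ∈ t, g i ^ b ≤ (t.card : ℝ) ^ (1 - b) * (∑ i ∈ t, g i) ^ b := by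
  set τ := ∑ i ∈ t, g i with hτ
  have hτ0 : 0 ≤ τ := Finset.sum_nonneg hg
  rcases eq_or_lt_of_le hτ0 with h0 | hpos
  · -- τ = 0, so all g i = 0
    have hall : ∀ i ∈ t, g i = 0 := by
      intro i hi
      exact le_antisymm (by
        have := Finset.single_le_sum hg hi
        linarith) (hg i hi)
    have : ∑ i ∈ t, g i ^ b = 0 := by
      apply Finset.sum_eq_zero
      intro i hi
      rw [hall i hi, Real.zero_rpow hb.ne']
    rw [this]
    positivity
  · have hne : t.Nonempty := by
      rcases Finset.eq_empty_or_nonempty t with h | h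
      · subst h; simp [hτ] at hpos
      · exact h
    have hcard : (0:ℝ) < t.card := by exact_mod_cast Finset.card_pos.mpr hne
    have key : ∀ i ∈ t, g i ^ b ≤ τ ^ b * (t.card : ℝ) ^ (1 - b) *
        (b * (g i / τ) + (1 - b) * (1 / t.card)) := by
      intro i hi
      have h1 : (g i / τ) ^ b * (1 / (t.card:ℝ)) ^ (1 - b) ≤
          b * (g i / τ) + (1 - b) * (1 / t.card) :=
        Real.geom_mean_le_arith_mean2_weighted hb.le (by linarith)
          (div_nonneg (hg i hi) hτ0) (by positivity) (by ring)
      have h2 : τ ^ b * (t.card : ℝ) ^ (1 - b) *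
          ((g i / τ) ^ b * (1 / (t.card:ℝ)) ^ (1 - b)) = g i ^ b := by
        rw [Real.div_rpow (hg i hi) hτ0, Real.div_rpow (by norm_num) hcard.le,
          Real.one_rpow]
        have hτb : (0:ℝ) < τ ^ b := Real.rpow_pos_of_pos hpos b
        have hcb : (0:ℝ) < (t.card:ℝ) ^ (1-b) := Real.rpow_pos_of_pos hcard _
        field_simp
      calc g i ^ b = τ ^ b * (t.card : ℝ) ^ (1 - b) *
          ((g i / τ) ^ b * (1 / (t.card:ℝ)) ^ (1 - b)) := h2.symm
        _ ≤ τ ^ b * (t.card : ℝ) ^ (1 - b) *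
            (b * (g i / τ) + (1 - b) * (1 / t.card)) := by
          apply mul_le_mul_of_nonneg_left h1
          positivity
    calc ∑ i ∈ t, g i ^ b ≤ ∑ i ∈ t, τ ^ b * (t.card : ℝ) ^ (1 - b) *
        (b * (g i / τ) + (1 - b) * (1 / t.card)) := Finset.sum_le_sum key
      _ = τ ^ b * (t.card : ℝ) ^ (1 - b) *
          (b * (τ / τ) + t.card * ((1 - b) * (1 / t.card))) := by
        rw [← Finset.mul_sum, Finset.sum_add_distrib, ← Finset.mul_sum,
          ← Finset.sum_div, Finset.sum_const, nsmul_eq_mul]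
      _ = (t.card : ℝ) ^ (1 - b) * τ ^ b := by
        rw [div_self hpos.ne']
        field_simp
        ring

lemma holder3 {ι : Type*} (t : Finset ι) (f g : ι → ℝ)
    (hf : ∀ i ∈ t, 0 ≤ f i) (hg : ∀ i ∈ t, 0 ≤ g i)
    {a b : ℝ} (ha : 0 ≤ a) (hb : 0 < b) (hab : a + b ≤ 1) :
    ∑ i ∈ t, f i ^ a * g i ^ b ≤
      (t.card : ℝ) ^ (1 - a - b) * (∑ i ∈ t, f i) ^ a * (∑ i ∈ t, g i) ^ b := by
  rcases eq_or_lt_of_le ha with ha0 | hapos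
  · -- a = 0
    simp only [← ha0, Real.rpow_zero, one_mul, mul_one, sub_zero]
    exact holder2 t g hg hb (by linarith)
  set σ := ∑ i ∈ t, f i with hσ
  set τ := ∑ i ∈ t, g i with hτ
  have hσ0 : 0 ≤ σ := Finset.sum_nonneg hf
  have hτ0 : 0 ≤ τ := Finset.sum_nonneg hg
  rcases eq_or_lt_of_le hσ0 with h0 | hσpos
  · have hall : ∀ i ∈ t, f i = 0 := fun i hi =>
      le_antisymm (by have := Finset.single_le_sum hf hi; linarith) (hf i hi)
    have h1 : ∑ i ∈ t, f i ^ a * g i ^ b = 0 := Finset.sum_eq_zero fun i hi => by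
      rw [hall i hi, Real.zero_rpow hapos.ne', zero_mul]
    have h2 : σ ^ a = 0 := by rw [← h0, Real.zero_rpow hapos.ne']
    rw [h1, h2, mul_zero, zero_mul]
  rcases eq_or_lt_of_le hτ0 with h0 | hτpos
  · have hall : ∀ i ∈ t, g i = 0 := fun i hi =>
      le_antisymm (by have := Finset.single_le_sum hg hi; linarith) (hg i hi)
    have h1 : ∑ i ∈ t, f i ^ a * g i ^ b = 0 := Finset.sum_eq_zero fun i hi => by
      rw [hall i hi, Real.zero_rpow hb.ne', mul_zero]
    have h2 : τ ^ b = 0 := by rw [← h0, Real.zero_rpow hb.ne']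
    rw [h1, h2, mul_zero]
  have hne : t.Nonempty := by
    rcases Finset.eq_empty_or_nonempty t with h | h
    · subst h; simp [hσ] at hσpos
    · exact h
  have hcard : (0:ℝ) < t.card := by exact_mod_cast Finset.card_pos.mpr hne
  have key : ∀ i ∈ t, f i ^ a * g i ^ b ≤
      σ ^ a * τ ^ b * (t.card : ℝ) ^ (1 - a - b) *
      (a * (f i / σ) + b * (g i / τ) + (1 - a - b) * (1 / t.card)) := by
    intro i hi
    have h1 : (f i / σ) ^ a * (g i / τ) ^ b * (1 / (t.card:ℝ)) ^ (1 - a - b) ≤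
        a * (f i / σ) + b * (g i / τ) + (1 - a - b) * (1 / t.card) :=
      Real.geom_mean_le_arith_mean3_weighted ha hb.le (by linarith)
        (div_nonneg (hf i hi) hσ0) (div_nonneg (hg i hi) hτ0) (by positivity)
        (by ring)
    have h2 : σ ^ a * τ ^ b * (t.card : ℝ) ^ (1 - a - b) *
        ((f i / σ) ^ a * (g i / τ) ^ b * (1 / (t.card:ℝ)) ^ (1 - a - b)) =
        f i ^ a * g i ^ b := by
      rw [Real.div_rpow (hf i hi) hσ0, Real.div_rpow (hg i hi) hτ0,
        Real.div_rpow (by norm_num) hcard.le, Real.one_rpow]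
      have h3 : (0:ℝ) < σ ^ a := Real.rpow_pos_of_pos hσpos a
      have h4 : (0:ℝ) < τ ^ b := Real.rpow_pos_of_pos hτpos b
      have h5 : (0:ℝ) < (t.card:ℝ) ^ (1 - a - b) := Real.rpow_pos_of_pos hcard _
      field_simp
    calc f i ^ a * g i ^ b = σ ^ a * τ ^ b * (t.card : ℝ) ^ (1 - a - b) *
        ((f i / σ) ^ a * (g i / τ) ^ b * (1 / (t.card:ℝ)) ^ (1 - a - b)) := h2.symm
      _ ≤ _ := by
        apply mul_le_mul_of_nonneg_left h1
        positivity
  calc ∑ i ∈ t, f i ^ a * g i ^ b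
      ≤ ∑ i ∈ t, σ ^ a * τ ^ b * (t.card : ℝ) ^ (1 - a - b) *
        (a * (f i / σ) + b * (g i / τ) + (1 - a - b) * (1 / t.card)) :=
      Finset.sum_le_sum key
    _ = σ ^ a * τ ^ b * (t.card : ℝ) ^ (1 - a - b) *
        (a * (σ / σ) + b * (τ / τ) + t.card * ((1 - a - b) * (1 / t.card))) := by
      rw [← Finset.mul_sum]
      congr 1
      rw [Finset.sum_add_distrib, Finset.sum_add_distrib, ← Finset.mul_sum,
        ← Finset.mul_sum, ← Finset.sum_div, ← Finset.sum_div, Finset.sum_const,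
        nsmul_eq_mul]
    _ = (t.card : ℝ) ^ (1 - a - b) * σ ^ a * τ ^ b := by
      rw [div_self hσpos.ne', div_self hτpos.ne']
      field_simp
      ring

lemma prod_le_aux {ι : Type*} (t : Finset ι) (x : ι → ℝ) (hx : ∀ i ∈ t, 0 ≤ x i)
    {p : ℝ} (hp : 0 < p) :
    ∏ i ∈ t, x i ≤ ((∑ i ∈ t, x i ^ p) / t.card) ^ ((t.card : ℝ) / p) := by
  rcases Finset.eq_empty_or_nonempty t with h | hne
  · subst h; simp
  have hcard : (0:ℝ) < t.card := by exact_mod_cast Finset.card_pos.mpr hne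
  have hprod : 0 ≤ ∏ i ∈ t, x i := Finset.prod_nonneg hx
  have amgm := Real.geom_mean_le_arith_mean_weighted t (fun _ => 1 / (t.card:ℝ))
    (fun i => x i ^ p) (fun i _ => by positivity)
    (by rw [Finset.sum_const, nsmul_eq_mul]; field_simp)
    (fun i hi => Real.rpow_nonneg (hx i hi) p)
  have hlhs : ∏ i ∈ t, (x i ^ p) ^ (1 / (t.card:ℝ)) =
      (∏ i ∈ t, x i) ^ (p / (t.card:ℝ)) := by
    rw [Real.finset_prod_rpow t _ (fun i hi => Real.rpow_nonneg (hx i hi) p),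
      Real.finset_prod_rpow t _ hx, ← Real.rpow_mul hprod]
    ring_nf
  have hrhs : ∑ i ∈ t, (1 / (t.card:ℝ)) * x i ^ p =
      (∑ i ∈ t, x i ^ p) / t.card := by
    rw [← Finset.mul_sum]; ring
  rw [hlhs, hrhs] at amgm
  have := Real.rpow_le_rpow (Real.rpow_nonneg hprod _) amgm
    (le_of_lt (by positivity : (0:ℝ) < (t.card:ℝ) / p))
  rwa [← Real.rpow_mul hprod, div_mul_div_comm, mul_comm p,
    div_self (by positivity), Real.rpow_one] at this

lemma tbound {t p : ℝ} (ht0 : 0 ≤ t) (ht1 : t ≤ 1) (hp : 0 < p) (r : ℕ) (hr : 0 < r) :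
    t ^ (1/p) * (1 - t) ^ (((r:ℝ)-1)/p) ≤
      ((r:ℝ)-1) ^ (((r:ℝ)-1)/p) / (r:ℝ) ^ ((r:ℝ)/p) := by
  rcases eq_or_lt_of_le (show 1 ≤ r from hr) with h1 | h2
  · -- r = 1
    have : (r:ℝ) = 1 := by exact_mod_cast h1.symm
    rw [this]
    simp only [sub_self, zero_div, Real.rpow_zero, mul_one, Real.one_rpow]
    rw [div_one]
    exact Real.rpow_le_one ht0 ht1 (by positivity)
  · -- r ≥ 2
    have hr1 : (1:ℝ) < (r:ℝ) := by exact_mod_cast h2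
    have hrpos : (0:ℝ) < r := by linarith
    have hr1pos : (0:ℝ) < (r:ℝ) - 1 := by linarith
    have ht1' : (0:ℝ) ≤ 1 - t := by linarith
    have hv2 : (0:ℝ) ≤ (r:ℝ) * (1-t) / ((r:ℝ)-1) := by positivity
    have amgm : ((r:ℝ) * t) ^ (1/(r:ℝ)) * ((r:ℝ) * (1-t) / ((r:ℝ)-1)) ^ (((r:ℝ)-1)/(r:ℝ)) ≤
        (1/(r:ℝ)) * ((r:ℝ) * t) + (((r:ℝ)-1)/(r:ℝ)) * ((r:ℝ) * (1-t) / ((r:ℝ)-1)) := by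
      apply Real.geom_mean_le_arith_mean2_weighted (by positivity)
        (le_of_lt (div_pos hr1pos hrpos)) (by positivity) hv2
      field_simp
      ring
    have hsum : (1/(r:ℝ)) * ((r:ℝ) * t) + (((r:ℝ)-1)/(r:ℝ)) * ((r:ℝ) * (1-t) / ((r:ℝ)-1)) = 1 := by
      field_simp
      ring
    rw [hsum] at amgm
    have base_nonneg : (0:ℝ) ≤ ((r:ℝ) * t) ^ (1/(r:ℝ)) * ((r:ℝ) * (1-t) / ((r:ℝ)-1)) ^ (((r:ℝ)-1)/(r:ℝ)) :=
      mul_nonneg (Real.rpow_nonneg (by positivity) _) (Real.rpow_nonneg hv2 _)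
    have key := Real.rpow_le_rpow base_nonneg amgm (le_of_lt (by positivity : (0:ℝ) < (r:ℝ)/p))
    rw [Real.one_rpow] at key
    have hexp : (((r:ℝ) * t) ^ (1/(r:ℝ)) * ((r:ℝ) * (1-t) / ((r:ℝ)-1)) ^ (((r:ℝ)-1)/(r:ℝ))) ^ ((r:ℝ)/p)
        = ((r:ℝ) * t) ^ (1/p) * ((r:ℝ) * (1-t) / ((r:ℝ)-1)) ^ (((r:ℝ)-1)/p) := by
      rw [Real.mul_rpow (Real.rpow_nonneg (by positivity) _) (Real.rpow_nonneg hv2 _),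
        ← Real.rpow_mul (by positivity : (0:ℝ) ≤ (r:ℝ)*t),
        ← Real.rpow_mul hv2]
      congr 1 <;> congr 1 <;> field_simp
    rw [hexp] at key
    have e1 : ((r:ℝ) * t) ^ (1/p) = (r:ℝ) ^ (1/p) * t ^ (1/p) :=
      Real.mul_rpow hrpos.le ht0
    have e2 : ((r:ℝ) * (1-t) / ((r:ℝ)-1)) ^ (((r:ℝ)-1)/p) =
        (r:ℝ) ^ (((r:ℝ)-1)/p) * (1-t) ^ (((r:ℝ)-1)/p) / ((r:ℝ)-1) ^ (((r:ℝ)-1)/p) := by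
      rw [Real.div_rpow (mul_nonneg hrpos.le ht1') hr1pos.le, Real.mul_rpow hrpos.le ht1']
    rw [e1, e2] at key
    have e3 : (r:ℝ) ^ (1/p) * (r:ℝ) ^ (((r:ℝ)-1)/p) = (r:ℝ) ^ ((r:ℝ)/p) := by
      rw [← Real.rpow_add hrpos]
      congr 1
      field_simp
      ring
    have hrp : (0:ℝ) < (r:ℝ) ^ ((r:ℝ)/p) := Real.rpow_pos_of_pos hrpos _
    have hrm : (0:ℝ) < ((r:ℝ)-1) ^ (((r:ℝ)-1)/p) := Real.rpow_pos_of_pos hr1pos _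
    rw [le_div_iff₀ hrp]
    have heq : t ^ (1/p) * (1-t) ^ (((r:ℝ)-1)/p) * (r:ℝ)^((r:ℝ)/p)
        = ((r:ℝ) ^ (1/p) * t ^ (1/p) *
            ((r:ℝ) ^ (((r:ℝ)-1)/p) * (1-t) ^ (((r:ℝ)-1)/p) / ((r:ℝ)-1) ^ (((r:ℝ)-1)/p))) *
          ((r:ℝ)-1) ^ (((r:ℝ)-1)/p) := by
      rw [← e3]
      field_simp
    have hfin := mul_le_mul_of_nonneg_right key hrm.le
    rw [heq]
    linarith

theorem specRad_eq_main (m n N r s : ℕ) (hr : 0 < r) (hs : 0 < s) (hN : 0 < N)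
    (G : DirectedHypergraph m n N r s) (c : Fin m)
    (hc : ∀ e, c ∈ G.tail e)
    (htails : ∀ e f, e ≠ f → G.tail e ∩ G.tail f = {c})
    (hheads : ∀ e f, e ≠ f → Disjoint (G.head e) (G.head f))
    (p q : ℝ) (hp : 1 ≤ p) (hq : 1 ≤ q)
    (hle : (r : ℝ) / p + (s : ℝ) / q ≤ 1) :
    G.specRad p q = (N : ℝ) ^ (1 - (((r : ℝ) - 1) / p + (s : ℝ) / q)) /
      ((r : ℝ) ^ ((r : ℝ) / p) * (s : ℝ) ^ ((s : ℝ) / q)) := by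
  have hp0 : (0:ℝ) < p := lt_of_lt_of_le one_pos hp
  have hq0 : (0:ℝ) < q := lt_of_lt_of_le one_pos hq
  have hNR : (0:ℝ) < N := by exact_mod_cast hN
  have hrR : (0:ℝ) < r := by exact_mod_cast hr
  have hsR : (0:ℝ) < s := by exact_mod_cast hs
  have hr1R : (0:ℝ) ≤ (r:ℝ) - 1 := by
    have : (1:ℝ) ≤ r := by exact_mod_cast hr
    linarith
  have ha : (0:ℝ) ≤ ((r:ℝ)-1)/p := div_nonneg hr1R hp0.le
  have hb : (0:ℝ) < (s:ℝ)/q := div_pos hsR hq0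
  have hab : ((r:ℝ)-1)/p + (s:ℝ)/q ≤ 1 := by
    have h1 : ((r:ℝ)-1)/p = (r:ℝ)/p - 1/p := by ring
    have h2 : (0:ℝ) < 1/p := by positivity
    linarith
  -- the target value
  set K := (N : ℝ) ^ (1 - (((r : ℝ) - 1) / p + (s : ℝ) / q)) /
      ((r : ℝ) ^ ((r : ℝ) / p) * (s : ℝ) ^ ((s : ℝ) / q)) with hK_def
  have hDpos : (0:ℝ) < ((r:ℝ)-1) ^ (((r:ℝ)-1)/p) := by
    rcases eq_or_lt_of_le hr1R with h | h
    · rw [← h, zero_div, Real.rpow_zero]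
      exact one_pos
    · exact Real.rpow_pos_of_pos h _
  have hrp : (0:ℝ) < (r:ℝ) ^ ((r:ℝ)/p) := Real.rpow_pos_of_pos hrR _
  have hsb : (0:ℝ) < (s:ℝ) ^ ((s:ℝ)/q) := Real.rpow_pos_of_pos hsR _
  have hKpos : 0 < K := by
    rw [hK_def]
    exact div_pos (Real.rpow_pos_of_pos hNR _) (mul_pos hrp hsb)
  -- the vertex sets
  set A := (Finset.univ : Finset (Fin N)).biUnion (fun e => (G.tail e).erase c) with hA_def
  set B := (Finset.univ : Finset (Fin N)).biUnion (fun e => G.head e) with hB_def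
  have hAd : ∀ e ∈ (Finset.univ : Finset (Fin N)), ∀ f ∈ (Finset.univ : Finset (Fin N)),
      e ≠ f → Disjoint ((G.tail e).erase c) ((G.tail f).erase c) := by
    intro e _ f _ hef
    rw [Finset.disjoint_left]
    intro u hu1 hu2
    have h1 := Finset.mem_erase.mp hu1
    have h2 := Finset.mem_erase.mp hu2
    have hmem : u ∈ G.tail e ∩ G.tail f := Finset.mem_inter.mpr ⟨h1.2, h2.2⟩
    rw [htails e f hef] at hmem
    exact h1.1 (Finset.mem_singleton.mp hmem)
  have hBd : ∀ e ∈ (Finset.univ : Finset (Fin N)), ∀ f ∈ (Finset.univ : Finset (Fin N)),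
      e ≠ f → Disjoint (G.head e) (G.head f) := fun e _ f _ h => hheads e f h
  have hcA : c ∉ A := by
    rw [hA_def]
    intro h
    obtain ⟨e, -, he⟩ := Finset.mem_biUnion.mp h
    exact (Finset.mem_erase.mp he).1 rfl
  have cardA : A.card = N * (r - 1) := by
    rw [hA_def, Finset.card_biUnion hAd]
    have h1 : ∀ e : Fin N, ((G.tail e).erase c).card = r - 1 := fun e => by
      rw [Finset.card_erase_of_mem (hc e), G.tail_card]
    simp [h1, Finset.sum_const, Finset.card_univ]
  have cardB : B.card = N * s := by
    rw [hB_def, Finset.card_biUnion hBd]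
    simp [G.head_card, Finset.sum_const, Finset.card_univ]
  have sumA : ∀ (f : Fin m → ℝ), ∑ u ∈ A, f u = ∑ e, ∑ u ∈ (G.tail e).erase c, f u := by
    intro f
    rw [hA_def]
    exact Finset.sum_biUnion (fun e he f hf hef => hAd e he f hf hef)
  have sumB : ∀ (f : Fin n → ℝ), ∑ v ∈ B, f v = ∑ e, ∑ v ∈ G.head e, f v := by
    intro f
    rw [hB_def]
    exact Finset.sum_biUnion (fun e he f hf hef => hBd e he f hf hef)
  have hmemA : ∀ e, ∀ u ∈ (G.tail e).erase c, u ∈ A := by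
    intro e u hu
    rw [hA_def]
    exact Finset.mem_biUnion.mpr ⟨e, Finset.mem_univ e, hu⟩
  have hmemB : ∀ e, ∀ v ∈ G.head e, v ∈ B := by
    intro e v hv
    rw [hB_def]
    exact Finset.mem_biUnion.mpr ⟨e, Finset.mem_univ e, hv⟩
  have hKmem : K ∈ {z | ∃ x y, DirectedHypergraph.pnorm p x = 1 ∧
      DirectedHypergraph.pnorm q y = 1 ∧ z = G.polyForm x y} := by
    classical
    set v1 : ℝ := ((r:ℝ)⁻¹) ^ ((1:ℝ)/p) with hv1_def
    set v2 : ℝ := (((N:ℝ) * (r:ℝ))⁻¹) ^ ((1:ℝ)/p) with hv2_def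
    set v3 : ℝ := (((N:ℝ) * (s:ℝ))⁻¹) ^ ((1:ℝ)/q) with hv3_def
    have hv1 : 0 < v1 := Real.rpow_pos_of_pos (inv_pos.mpr hrR) _
    have hv2 : 0 < v2 := Real.rpow_pos_of_pos (inv_pos.mpr (mul_pos hNR hrR)) _
    have hv3 : 0 < v3 := Real.rpow_pos_of_pos (inv_pos.mpr (mul_pos hNR hsR)) _
    refine ⟨fun u => if u = c then v1 else if u ∈ A then v2 else 0,
      fun v => if v ∈ B then v3 else 0, ?_, ?_, ?_⟩
    · simp only [DirectedHypergraph.pnorm]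
      have hsum : ∑ u : Fin m, |if u = c then v1 else if u ∈ A then v2 else 0| ^ p = 1 := by
        have hsub : ∑ u : Fin m, |if u = c then v1 else if u ∈ A then v2 else 0| ^ p
            = ∑ u ∈ insert c A, |if u = c then v1 else if u ∈ A then v2 else 0| ^ p := by
          refine (Finset.sum_subset (Finset.subset_univ _) ?_).symm
          intro u _ hu
          rw [Finset.mem_insert] at hu
          push_neg at hu
          rw [if_neg hu.1, if_neg hu.2, abs_zero, Real.zero_rpow hp0.ne']
        have hA2 : ∑ u ∈ A, |if u = c then v1 else if u ∈ A then v2 else 0| ^ p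
            = A.card * |v2| ^ p := by
          rw [Finset.sum_congr rfl (fun u hu => ?_), Finset.sum_const, nsmul_eq_mul]
          have hne : ¬ u = c := fun h => hcA (h ▸ hu)
          rw [if_neg hne, if_pos hu]
        rw [hsub, Finset.sum_insert hcA, if_pos rfl, hA2, cardA,
          abs_of_pos hv1, abs_of_pos hv2, hv1_def, hv2_def,
          ← Real.rpow_mul (inv_nonneg.mpr hrR.le),
          ← Real.rpow_mul (inv_nonneg.mpr (mul_pos hNR hrR).le),
          one_div, inv_mul_cancel₀ hp0.ne', Real.rpow_one, Real.rpow_one,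
          Nat.cast_mul, Nat.cast_sub hr, Nat.cast_one]
        field_simp
        ring
      rw [hsum, Real.one_rpow]
    · simp only [DirectedHypergraph.pnorm]
      have hsum : ∑ v : Fin n, |if v ∈ B then v3 else 0| ^ q = 1 := by
        have hsub : ∑ v : Fin n, |if v ∈ B then v3 else 0| ^ q
            = ∑ v ∈ B, |if v ∈ B then v3 else 0| ^ q := by
          refine (Finset.sum_subset (Finset.subset_univ _) ?_).symm
          intro v _ hv
          rw [if_neg hv, abs_zero, Real.zero_rpow hq0.ne']
        have hB2 : ∑ v ∈ B, |if v ∈ B then v3 else 0| ^ q = B.card * |v3| ^ q := by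
          rw [Finset.sum_congr rfl (fun v hv => by rw [if_pos hv]), Finset.sum_const,
            nsmul_eq_mul]
        rw [hsub, hB2, cardB, abs_of_pos hv3, hv3_def,
          ← Real.rpow_mul (inv_nonneg.mpr (mul_pos hNR hsR).le),
          one_div, inv_mul_cancel₀ hq0.ne', Real.rpow_one, Nat.cast_mul]
        field_simp
      rw [hsum, Real.one_rpow]
    · have hprod : ∀ e : Fin N,
          (∏ u ∈ G.tail e, (if u = c then v1 else if u ∈ A then v2 else 0))
          * ∏ v ∈ G.head e, (if v ∈ B then v3 else 0) = v1 * v2 ^ (r-1) * v3 ^ s := by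
        intro e
        rw [← Finset.mul_prod_erase _ _ (hc e), if_pos rfl]
        have h1 : ∏ u ∈ (G.tail e).erase c,
            (if u = c then v1 else if u ∈ A then v2 else 0) = v2 ^ (r-1) := by
          rw [Finset.prod_congr rfl (fun u hu => ?_), Finset.prod_const,
            Finset.card_erase_of_mem (hc e), G.tail_card]
          rw [if_neg (Finset.mem_erase.mp hu).1, if_pos (hmemA e u hu)]
        have h2 : ∏ v ∈ G.head e, (if v ∈ B then v3 else 0) = v3 ^ s := by
          rw [Finset.prod_congr rfl (fun v hv => if_pos (hmemB e v hv)),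
            Finset.prod_const, G.head_card]
        rw [h1, h2, mul_assoc]
      simp only [DirectedHypergraph.polyForm]
      rw [Finset.sum_congr rfl (fun e _ => hprod e), Finset.sum_const, Finset.card_univ,
        Fintype.card_fin, nsmul_eq_mul]
      have hL : (0:ℝ) < (N:ℝ) * (v1 * v2 ^ (r-1) * v3 ^ s) :=
        mul_pos hNR (mul_pos (mul_pos hv1 (pow_pos hv2 _)) (pow_pos hv3 _))
      have hlog : Real.log ((N:ℝ) * (v1 * v2 ^ (r-1) * v3 ^ s)) = Real.log K := by
        have l1 : Real.log v1 = -(1/p) * Real.log r := by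
          rw [hv1_def, Real.log_rpow (inv_pos.mpr hrR), Real.log_inv]
          ring
        have l2 : Real.log v2 = -(1/p) * (Real.log N + Real.log r) := by
          rw [hv2_def, Real.log_rpow (inv_pos.mpr (mul_pos hNR hrR)), Real.log_inv,
            Real.log_mul hNR.ne' hrR.ne']
          ring
        have l3 : Real.log v3 = -(1/q) * (Real.log N + Real.log s) := by
          rw [hv3_def, Real.log_rpow (inv_pos.mpr (mul_pos hNR hsR)), Real.log_inv,
            Real.log_mul hNR.ne' hsR.ne']
          ring
        have hKlog : Real.log K = (1 - (((r:ℝ)-1)/p + (s:ℝ)/q)) * Real.log N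
            - ((r:ℝ)/p * Real.log r + (s:ℝ)/q * Real.log s) := by
          rw [hK_def, Real.log_div (Real.rpow_pos_of_pos hNR _).ne' (mul_pos hrp hsb).ne',
            Real.log_rpow hNR, Real.log_mul hrp.ne' hsb.ne', Real.log_rpow hrR,
            Real.log_rpow hsR]
        rw [Real.log_mul hNR.ne' (mul_pos (mul_pos hv1 (pow_pos hv2 _)) (pow_pos hv3 _)).ne',
          Real.log_mul (mul_pos hv1 (pow_pos hv2 _)).ne' (pow_pos hv3 _).ne',
          Real.log_mul hv1.ne' (pow_pos hv2 _).ne', Real.log_pow, Real.log_pow,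
          l1, l2, l3, hKlog, Nat.cast_sub hr, Nat.cast_one]
        field_simp
        ring
      have hfin := congrArg Real.exp hlog
      rw [Real.exp_log hL, Real.exp_log hKpos] at hfin
      exact hfin.symm
  have hKub : ∀ z ∈ {z | ∃ x y, DirectedHypergraph.pnorm p x = 1 ∧
      DirectedHypergraph.pnorm q y = 1 ∧ z = G.polyForm x y}, z ≤ K := by
    rintro z ⟨x, y, hxnorm, hynorm, rfl⟩
    have hxn : ∀ u : Fin m, (0:ℝ) ≤ |x u| ^ p := fun u => Real.rpow_nonneg (abs_nonneg _) _
    have hyn : ∀ v : Fin n, (0:ℝ) ≤ |y v| ^ q := fun v => Real.rpow_nonneg (abs_nonneg _) _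
    have hxs : ∑ u : Fin m, |x u| ^ p = 1 := by
      simp only [DirectedHypergraph.pnorm] at hxnorm
      have h0 : (0:ℝ) ≤ ∑ u : Fin m, |x u| ^ p := Finset.sum_nonneg (fun u _ => hxn u)
      have h1 : ((∑ u : Fin m, |x u| ^ p) ^ ((1:ℝ)/p)) ^ p = 1 := by
        rw [hxnorm, Real.one_rpow]
      rwa [← Real.rpow_mul h0, one_div, inv_mul_cancel₀ hp0.ne', Real.rpow_one] at h1
    have hys : ∑ v : Fin n, |y v| ^ q = 1 := by
      simp only [DirectedHypergraph.pnorm] at hynorm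
      have h0 : (0:ℝ) ≤ ∑ v : Fin n, |y v| ^ q := Finset.sum_nonneg (fun v _ => hyn v)
      have h1 : ((∑ v : Fin n, |y v| ^ q) ^ ((1:ℝ)/q)) ^ q = 1 := by
        rw [hynorm, Real.one_rpow]
      rwa [← Real.rpow_mul h0, one_div, inv_mul_cancel₀ hq0.ne', Real.rpow_one] at h1
    set t := |x c| ^ p with ht_def
    have ht0 : 0 ≤ t := hxn c
    have ht1 : t ≤ 1 := by
      rw [← hxs]
      exact Finset.single_le_sum (fun u _ => hxn u) (Finset.mem_univ c)
    set F : Fin N → ℝ := fun e => ∑ u ∈ (G.tail e).erase c, |x u| ^ p with hF_def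
    set H : Fin N → ℝ := fun e => ∑ v ∈ G.head e, |y v| ^ q with hH_def
    have hF : ∀ e, 0 ≤ F e := fun e => Finset.sum_nonneg (fun u _ => hxn u)
    have hH : ∀ e, 0 ≤ H e := fun e => Finset.sum_nonneg (fun v _ => hyn v)
    have hσ0 : (0:ℝ) ≤ ∑ e, F e := Finset.sum_nonneg fun e _ => hF e
    have hτ0 : (0:ℝ) ≤ ∑ e, H e := Finset.sum_nonneg fun e _ => hH e
    have hσ : t + ∑ e, F e ≤ 1 := by
      have h1 : ∑ u ∈ insert c A, |x u| ^ p ≤ 1 := by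
        rw [← hxs]
        exact Finset.sum_le_sum_of_subset_of_nonneg (Finset.subset_univ _)
          (fun u _ _ => hxn u)
      rw [Finset.sum_insert hcA] at h1
      have h2 : ∑ e, F e = ∑ u ∈ A, |x u| ^ p := (sumA (fun u => |x u| ^ p)).symm
      rw [h2]
      exact h1
    have hτ : ∑ e, H e ≤ 1 := by
      have h1 : ∑ v ∈ B, |y v| ^ q ≤ 1 := by
        rw [← hys]
        exact Finset.sum_le_sum_of_subset_of_nonneg (Finset.subset_univ _)
          (fun v _ _ => hyn v)
      rw [sumB] at h1
      exact h1
    have hquot : (0:ℝ) ≤ |x c| / (((r:ℝ)-1) ^ (((r:ℝ)-1)/p) * (s:ℝ) ^ ((s:ℝ)/q)) :=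
      div_nonneg (abs_nonneg _) (mul_pos hDpos hsb).le
    have step1 : G.polyForm x y ≤ ∑ e, |x c| * (F e / ((r:ℝ)-1)) ^ (((r:ℝ)-1)/p)
        * (H e / (s:ℝ)) ^ ((s:ℝ)/q) := by
      simp only [DirectedHypergraph.polyForm]
      apply Finset.sum_le_sum
      intro e _
      have hsplit : ∏ u ∈ G.tail e, |x u| = |x c| * ∏ u ∈ (G.tail e).erase c, |x u| :=
        (Finset.mul_prod_erase _ _ (hc e)).symm
      have card_e : ((((G.tail e).erase c).card : ℕ) : ℝ) = (r:ℝ) - 1 := by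
        rw [Finset.card_erase_of_mem (hc e), G.tail_card, Nat.cast_sub hr, Nat.cast_one]
      have card_h : (((G.head e).card : ℕ) : ℝ) = (s:ℝ) := by rw [G.head_card]
      have h1 : ∏ u ∈ (G.tail e).erase c, |x u| ≤ (F e / ((r:ℝ)-1)) ^ (((r:ℝ)-1)/p) := by
        have h := prod_le_aux ((G.tail e).erase c) (fun u => |x u|) (fun _ _ => abs_nonneg _) hp0
        rw [card_e] at h
        exact h
      have h2 : ∏ v ∈ G.head e, |y v| ≤ (H e / (s:ℝ)) ^ ((s:ℝ)/q) := by
        have h := prod_le_aux (G.head e) (fun v => |y v|) (fun _ _ => abs_nonneg _) hq0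
        rw [card_h] at h
        exact h
      calc (∏ u ∈ G.tail e, x u) * ∏ v ∈ G.head e, y v
          ≤ |(∏ u ∈ G.tail e, x u) * ∏ v ∈ G.head e, y v| := le_abs_self _
        _ = (∏ u ∈ G.tail e, |x u|) * ∏ v ∈ G.head e, |y v| := by
            rw [abs_mul, Finset.abs_prod, Finset.abs_prod]
        _ = |x c| * (∏ u ∈ (G.tail e).erase c, |x u|) * ∏ v ∈ G.head e, |y v| := by
            rw [hsplit]
        _ ≤ |x c| * (F e / ((r:ℝ)-1)) ^ (((r:ℝ)-1)/p) * (H e / (s:ℝ)) ^ ((s:ℝ)/q) := by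
            apply mul_le_mul (mul_le_mul_of_nonneg_left h1 (abs_nonneg _)) h2
              (Finset.prod_nonneg (fun _ _ => abs_nonneg _))
              (mul_nonneg (abs_nonneg _) (Real.rpow_nonneg (div_nonneg (hF e) hr1R) _))
    have step2 : ∑ e, |x c| * (F e / ((r:ℝ)-1)) ^ (((r:ℝ)-1)/p) * (H e / (s:ℝ)) ^ ((s:ℝ)/q)
        = |x c| / (((r:ℝ)-1) ^ (((r:ℝ)-1)/p) * (s:ℝ) ^ ((s:ℝ)/q)) *
          ∑ e, (F e) ^ (((r:ℝ)-1)/p) * (H e) ^ ((s:ℝ)/q) := by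
      rw [Finset.mul_sum]
      apply Finset.sum_congr rfl
      intro e _
      rw [Real.div_rpow (hF e) hr1R, Real.div_rpow (hH e) hsR.le]
      field_simp
    have step3 : ∑ e, (F e) ^ (((r:ℝ)-1)/p) * (H e) ^ ((s:ℝ)/q)
        ≤ (N:ℝ) ^ (1 - ((r:ℝ)-1)/p - (s:ℝ)/q) * (∑ e, F e) ^ (((r:ℝ)-1)/p) *
          (∑ e, H e) ^ ((s:ℝ)/q) := by
      have h := holder3 Finset.univ F H (fun e _ => hF e) (fun e _ => hH e) ha hb hab
      rwa [Finset.card_univ, Fintype.card_fin] at h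
    have hσa : (∑ e, F e) ^ (((r:ℝ)-1)/p) ≤ (1-t) ^ (((r:ℝ)-1)/p) :=
      Real.rpow_le_rpow hσ0 (by linarith) ha
    have hτb : (∑ e, H e) ^ ((s:ℝ)/q) ≤ 1 := Real.rpow_le_one hτ0 hτ hb.le
    have hxc : |x c| = t ^ ((1:ℝ)/p) := by
      rw [ht_def, ← Real.rpow_mul (abs_nonneg _), mul_one_div, div_self hp0.ne',
        Real.rpow_one]
    calc G.polyForm x y
        ≤ ∑ e, |x c| * (F e / ((r:ℝ)-1)) ^ (((r:ℝ)-1)/p) * (H e / (s:ℝ)) ^ ((s:ℝ)/q) := step1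
      _ = |x c| / (((r:ℝ)-1) ^ (((r:ℝ)-1)/p) * (s:ℝ) ^ ((s:ℝ)/q)) *
          ∑ e, (F e) ^ (((r:ℝ)-1)/p) * (H e) ^ ((s:ℝ)/q) := step2
      _ ≤ |x c| / (((r:ℝ)-1) ^ (((r:ℝ)-1)/p) * (s:ℝ) ^ ((s:ℝ)/q)) *
          ((N:ℝ) ^ (1 - ((r:ℝ)-1)/p - (s:ℝ)/q) * (∑ e, F e) ^ (((r:ℝ)-1)/p) *
          (∑ e, H e) ^ ((s:ℝ)/q)) := mul_le_mul_of_nonneg_left step3 hquot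
      _ ≤ |x c| / (((r:ℝ)-1) ^ (((r:ℝ)-1)/p) * (s:ℝ) ^ ((s:ℝ)/q)) *
          ((N:ℝ) ^ (1 - ((r:ℝ)-1)/p - (s:ℝ)/q) * (1-t) ^ (((r:ℝ)-1)/p) * 1) := by
          apply mul_le_mul_of_nonneg_left _ hquot
          exact mul_le_mul (mul_le_mul_of_nonneg_left hσa (Real.rpow_nonneg hNR.le _)) hτb
            (Real.rpow_nonneg hτ0 _)
            (mul_nonneg (Real.rpow_nonneg hNR.le _) (Real.rpow_nonneg (by linarith) _))
      _ = (N:ℝ) ^ (1 - ((r:ℝ)-1)/p - (s:ℝ)/q) /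
          (((r:ℝ)-1) ^ (((r:ℝ)-1)/p) * (s:ℝ) ^ ((s:ℝ)/q)) *
          (t ^ ((1:ℝ)/p) * (1-t) ^ (((r:ℝ)-1)/p)) := by
          rw [hxc]
          ring
      _ ≤ (N:ℝ) ^ (1 - ((r:ℝ)-1)/p - (s:ℝ)/q) /
          (((r:ℝ)-1) ^ (((r:ℝ)-1)/p) * (s:ℝ) ^ ((s:ℝ)/q)) *
          (((r:ℝ)-1) ^ (((r:ℝ)-1)/p) / (r:ℝ) ^ ((r:ℝ)/p)) := by
          apply mul_le_mul_of_nonneg_left _ (by positivity)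
          have := tbound ht0 ht1 hp0 r hr
          rw [one_div] at this ⊢
          exact this
      _ = K := by
          rw [hK_def, show (1:ℝ) - (((r:ℝ)-1)/p + (s:ℝ)/q) = 1 - ((r:ℝ)-1)/p - (s:ℝ)/q
            from by ring]
          field_simp
  exact IsGreatest.csSup_eq ⟨hKmem, hKub⟩

/-- The `(p,q)`-spectral radius of an out-hyperstar with `N` arcs: all arcs share
exactly the center `c` in their tails and are otherwise vertex-disjoint. If
`r/p + s/q < 1` then `λ_{p,q} = N^{1−((r−1)/p+s/q)}/(r^{r/p} s^{s/q})`, and if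
`r/p + s/q = 1` then `λ_{p,q} = N^{1/p}/(r^{r/p} s^{s/q})`. -/
theorem specRad_out_hyperstar (m n N r s : ℕ) (hr : 0 < r) (hs : 0 < s) (hN : 0 < N)
    (G : DirectedHypergraph m n N r s) (c : Fin m)
    (hc : ∀ e, c ∈ G.tail e)
    (htails : ∀ e f, e ≠ f → G.tail e ∩ G.tail f = {c})
    (hheads : ∀ e f, e ≠ f → Disjoint (G.head e) (G.head f))
    (p q : ℝ) (hp : 1 ≤ p) (hq : 1 ≤ q) :
    ((r : ℝ) / p + (s : ℝ) / q < 1 →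
      G.specRad p q = (N : ℝ) ^ (1 - (((r : ℝ) - 1) / p + (s : ℝ) / q)) /
        ((r : ℝ) ^ ((r : ℝ) / p) * (s : ℝ) ^ ((s : ℝ) / q))) ∧
    ((r : ℝ) / p + (s : ℝ) / q = 1 →
      G.specRad p q = (N : ℝ) ^ (1 / p) /
        ((r : ℝ) ^ ((r : ℝ) / p) * (s : ℝ) ^ ((s : ℝ) / q))) := by
  constructor
  · intro hlt
    exact specRad_eq_main m n N r s hr hs hN G c hc htails hheads p q hp hq hlt.le
  · intro heq
    have h1 := specRad_eq_main m n N r s hr hs hN G c hc htails hheads p q hp hq heq.le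
    have h2 : (1:ℝ) - (((r:ℝ)-1)/p + (s:ℝ)/q) = 1/p := by
      have h3 : ((r:ℝ)-1)/p = (r:ℝ)/p - 1/p := by ring
      linarith
    rw [h2] at h1
    exact h1
end

section
/- Let G be an (r,s)-directed hypergraph with maximum out-degree Δ⁺ and maximum in-degree Δ⁻. If r/p + s/q ≥ 1, then λ_{p,q}(G) ≤ (Δ⁺/r)^{r/p}(Δ⁻/s)^{s/q}. If r/p + s/q < 1, then λ_{p,q}(G) ≤ |E(G)|^{1−(r/p+s/q)} (Δ⁺/r)^{r/p}(Δ⁻/s)^{s/q}. -/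
open Finset

lemma aux_holder {ι : Type*} (s : Finset ι) (F G : ι → ℝ) (hF : ∀ i, 0 ≤ F i)
    (hG : ∀ i, 0 ≤ G i) {c : ℝ} (hc0 : 0 < c) (hc1 : c < 1) :
    ∑ i ∈ s, F i ^ c * G i ^ (1 - c) ≤ (∑ i ∈ s, F i) ^ c * (∑ i ∈ s, G i) ^ (1 - c) := by
  have hc1' : 0 < 1 - c := by linarith
  have hpq : (1/c).HolderConjugate (1/(1-c)) := by
    constructor
    · rw [one_div, one_div, inv_inv, inv_inv, inv_one]; ring
    · positivity
    · positivity
  have h := Real.inner_le_Lp_mul_Lq_of_nonneg s hpq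
      (f := fun i => F i ^ c) (g := fun i => G i ^ (1-c))
      (fun i _ => Real.rpow_nonneg (hF i) _) (fun i _ => Real.rpow_nonneg (hG i) _)
  have e1 : ∀ i, ((F i ^ c) ^ (1/c)) = F i := fun i => by
    rw [← Real.rpow_mul (hF i), mul_one_div, div_self hc0.ne', Real.rpow_one]
  have e2 : ∀ i, ((G i ^ (1-c)) ^ (1/(1-c))) = G i := fun i => by
    rw [← Real.rpow_mul (hG i), mul_one_div, div_self hc1'.ne', Real.rpow_one]
  simp only [e1, e2, one_div_one_div] at h
  exact h

lemma aux_sum_rpow {ι : Type*} (s : Finset ι) (f : ι → ℝ) (hf : ∀ i, 0 ≤ f i)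
    {σ : ℝ} (hσ : 1 ≤ σ) : ∑ i ∈ s, f i ^ σ ≤ (∑ i ∈ s, f i) ^ σ := by
  have hS : 0 ≤ ∑ i ∈ s, f i := Finset.sum_nonneg fun i _ => hf i
  have hσ0 : σ ≠ 0 := by linarith
  have hsplit : ∀ x : ℝ, 0 ≤ x → x ^ σ = x ^ (σ - 1) * x := by
    intro x hx
    have h := Real.rpow_add' hx (y := σ - 1) (z := 1) (by simpa using hσ0)
    rw [Real.rpow_one] at h
    rw [← h]; norm_num
  calc ∑ i ∈ s, f i ^ σ ≤ ∑ i ∈ s, (∑ j ∈ s, f j) ^ (σ-1) * f i := by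
        refine Finset.sum_le_sum fun i hi => ?_
        rw [hsplit (f i) (hf i)]
        exact mul_le_mul_of_nonneg_right
          (Real.rpow_le_rpow (hf i) (Finset.single_le_sum (fun j _ => hf j) hi) (by linarith))
          (hf i)
    _ = (∑ i ∈ s, f i) ^ σ := by rw [← Finset.mul_sum, ← hsplit _ hS]

lemma aux_case1 {N' : ℕ} (P Q : Fin N' → ℝ) (hP : ∀ e, 0 ≤ P e) (hQ : ∀ e, 0 ≤ Q e)
    {c d M1 M2 : ℝ} (hc : 0 < c) (hd : 0 < d) (hσ : 1 ≤ c + d)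
    (hSP : ∑ e, P e ≤ M1) (hSQ : ∑ e, Q e ≤ M2) :
    ∑ e, P e ^ c * Q e ^ d ≤ M1 ^ c * M2 ^ d := by
  have hσ0 : (0:ℝ) < c + d := by linarith
  have hSP0 : 0 ≤ ∑ e, P e := Finset.sum_nonneg fun e _ => hP e
  have hSQ0 : 0 ≤ ∑ e, Q e := Finset.sum_nonneg fun e _ => hQ e
  have hM1 : 0 ≤ M1 := hSP0.trans hSP
  have hM2 : 0 ≤ M2 := hSQ0.trans hSQ
  have hc' : 0 < c/(c+d) := div_pos hc hσ0
  have hc'1 : c/(c+d) < 1 := (div_lt_one hσ0).2 (by linarith)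
  have h1c : 1 - c/(c+d) = d/(c+d) := by field_simp; ring
  have e1 : (c+d) * (c/(c+d)) = c := by field_simp
  have e2 : (c+d) * (d/(c+d)) = d := by field_simp
  calc ∑ e, P e ^ c * Q e ^ d
      = ∑ e, (P e ^ (c+d)) ^ (c/(c+d)) * (Q e ^ (c+d)) ^ (1 - c/(c+d)) := by
        refine Finset.sum_congr rfl fun e _ => ?_
        rw [h1c, ← Real.rpow_mul (hP e), ← Real.rpow_mul (hQ e), e1, e2]
    _ ≤ (∑ e, P e ^ (c+d)) ^ (c/(c+d)) * (∑ e, Q e ^ (c+d)) ^ (1 - c/(c+d)) :=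
        aux_holder _ _ _ (fun e => Real.rpow_nonneg (hP e) _)
          (fun e => Real.rpow_nonneg (hQ e) _) hc' hc'1
    _ ≤ ((∑ e, P e) ^ (c+d)) ^ (c/(c+d)) * ((∑ e, Q e) ^ (c+d)) ^ (1 - c/(c+d)) := by
        gcongr <;> first
          | positivity
          | exact aux_sum_rpow _ _ hP hσ
          | exact aux_sum_rpow _ _ hQ hσ
          | linarith
          | exact Finset.sum_nonneg fun e _ => Real.rpow_nonneg (hP e) _
          | exact Finset.sum_nonneg fun e _ => Real.rpow_nonneg (hQ e) _
          | exact Real.rpow_nonneg (Finset.sum_nonneg fun e _ => Real.rpow_nonneg (hP e) _) _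
          | exact Real.rpow_nonneg (Finset.sum_nonneg fun e _ => Real.rpow_nonneg (hQ e) _) _
    _ = (∑ e, P e) ^ c * (∑ e, Q e) ^ d := by
        rw [h1c, ← Real.rpow_mul hSP0, ← Real.rpow_mul hSQ0, e1, e2]
    _ ≤ M1 ^ c * M2 ^ d := by
        gcongr <;> first | exact hSP0 | exact hSQ0 | exact hSP | exact hSQ

lemma aux_case2 {N' : ℕ} (P Q : Fin N' → ℝ) (hP : ∀ e, 0 ≤ P e) (hQ : ∀ e, 0 ≤ Q e)
    {c d M1 M2 : ℝ} (hc : 0 < c) (hd : 0 < d) (hσ : c + d < 1)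
    (hSP : ∑ e, P e ≤ M1) (hSQ : ∑ e, Q e ≤ M2) :
    ∑ e, P e ^ c * Q e ^ d ≤ (N' : ℝ) ^ (1 - (c + d)) * M1 ^ c * M2 ^ d := by
  have hc1 : c < 1 := by linarith
  have h1c : 0 < 1 - c := by linarith
  have hSP0 : 0 ≤ ∑ e, P e := Finset.sum_nonneg fun e _ => hP e
  have hSQ0 : 0 ≤ ∑ e, Q e := Finset.sum_nonneg fun e _ => hQ e
  have hM1 : 0 ≤ M1 := hSP0.trans hSP
  have hM2 : 0 ≤ M2 := hSQ0.trans hSQ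
  have ht0 : 0 < d/(1-c) := div_pos hd h1c
  have ht1 : d/(1-c) < 1 := (div_lt_one h1c).2 (by linarith)
  have htd : (d/(1-c)) * (1-c) = d := by field_simp
  have hN : (0:ℝ) ≤ (N':ℝ) := Nat.cast_nonneg _
  have hQt : ∑ e, Q e ^ (d/(1-c)) ≤ (∑ e, Q e) ^ (d/(1-c)) * (N':ℝ) ^ (1 - d/(1-c)) := by
    have h := aux_holder Finset.univ Q (fun _ => (1:ℝ)) hQ (fun _ => zero_le_one) ht0 ht1
    simpa [Real.one_rpow, Finset.card_univ] using h
  calc ∑ e, P e ^ c * Q e ^ d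
      = ∑ e, P e ^ c * (Q e ^ (d/(1-c))) ^ (1-c) := by
        refine Finset.sum_congr rfl fun e _ => ?_
        rw [← Real.rpow_mul (hQ e), htd]
    _ ≤ (∑ e, P e) ^ c * (∑ e, Q e ^ (d/(1-c))) ^ (1-c) :=
        aux_holder _ _ _ hP (fun e => Real.rpow_nonneg (hQ e) _) hc hc1
    _ ≤ (∑ e, P e) ^ c * ((∑ e, Q e) ^ (d/(1-c)) * (N':ℝ) ^ (1 - d/(1-c))) ^ (1-c) := by
        gcongr <;> first
          | positivity
          | exact hQt
          | linarith
          | exact Finset.sum_nonneg fun e _ => Real.rpow_nonneg (hP e) _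
          | exact Finset.sum_nonneg fun e _ => Real.rpow_nonneg (hQ e) _
          | exact Real.rpow_nonneg (Finset.sum_nonneg fun e _ => Real.rpow_nonneg (hP e) _) _
          | exact Real.rpow_nonneg (Finset.sum_nonneg fun e _ => Real.rpow_nonneg (hQ e) _) _
    _ = (N':ℝ) ^ (1 - (c+d)) * (∑ e, P e) ^ c * (∑ e, Q e) ^ d := by
        rw [Real.mul_rpow (Real.rpow_nonneg hSQ0 _) (Real.rpow_nonneg hN _),
            ← Real.rpow_mul hSQ0, ← Real.rpow_mul hN, htd,
            show (1 - d/(1-c)) * (1-c) = 1 - (c+d) by field_simp; try ring]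
        ring
    _ ≤ (N':ℝ) ^ (1 - (c+d)) * M1 ^ c * M2 ^ d := by
        gcongr <;> first | exact hSP0 | exact hSQ0 | exact hSP | exact hSQ

lemma aux_key {k N' : ℕ} (T : Fin N' → Finset (Fin k)) {r' : ℕ} (hr : 0 < r')
    (hcard : ∀ e, (T e).card = r') (Δ : ℕ)
    (hΔ : ∀ u, (Finset.univ.filter fun e => u ∈ T e).card ≤ Δ)
    (a : Fin k → ℝ) (ha0 : ∀ u, 0 ≤ a u) {p : ℝ} (hp0 : 0 < p) (ha : ∑ u, a u ^ p = 1) :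
    ∑ e, (∏ u ∈ T e, a u) ^ (p / (r' : ℝ)) ≤ (Δ : ℝ) / (r' : ℝ) := by
  have hr0 : (0:ℝ) < (r':ℝ) := by exact_mod_cast hr
  have step1 : ∀ e, (∏ u ∈ T e, a u) ^ (p / (r':ℝ)) ≤ ∑ u ∈ T e, (1/(r':ℝ)) * a u ^ p := by
    intro e
    have h1 : (∏ u ∈ T e, a u) ^ (p/(r':ℝ)) = ∏ u ∈ T e, (a u ^ p) ^ (1/(r':ℝ)) := by
      rw [← Real.finset_prod_rpow _ _ (fun u _ => ha0 u) _]
      refine Finset.prod_congr rfl fun u _ => ?_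
      rw [← Real.rpow_mul (ha0 u), mul_one_div]
    rw [h1]
    exact Real.geom_mean_le_arith_mean_weighted (T e) (fun _ => 1/(r':ℝ)) (fun u => a u ^ p)
      (fun u _ => by positivity)
      (by rw [Finset.sum_const, hcard e, nsmul_eq_mul]; field_simp)
      (fun u _ => Real.rpow_nonneg (ha0 u) _)
  calc ∑ e, (∏ u ∈ T e, a u) ^ (p/(r':ℝ))
      ≤ ∑ e, ∑ u ∈ T e, (1/(r':ℝ)) * a u ^ p := Finset.sum_le_sum fun e _ => step1 e
    _ = (1/(r':ℝ)) * ∑ e, ∑ u ∈ T e, a u ^ p := by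
        rw [Finset.mul_sum]
        exact Finset.sum_congr rfl fun e _ => (Finset.mul_sum _ _ _).symm
    _ = (1/(r':ℝ)) * ∑ u, ((Finset.univ.filter fun e => u ∈ T e).card : ℝ) * a u ^ p := by
        congr 1
        have h2 : ∀ e, ∑ u ∈ T e, a u ^ p = ∑ u, if u ∈ T e then a u ^ p else 0 := fun e => by
          rw [Finset.sum_ite_mem, Finset.univ_inter]
        simp_rw [h2]
        rw [Finset.sum_comm]
        refine Finset.sum_congr rfl fun u _ => ?_
        rw [Finset.sum_ite, Finset.sum_const_zero, add_zero, Finset.sum_const, nsmul_eq_mul]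
    _ ≤ (1/(r':ℝ)) * ∑ u, (Δ:ℝ) * a u ^ p := by
        refine mul_le_mul_of_nonneg_left ?_ (by positivity)
        refine Finset.sum_le_sum fun u _ => mul_le_mul_of_nonneg_right ?_ (Real.rpow_nonneg (ha0 u) _)
        exact_mod_cast hΔ u
    _ = (Δ:ℝ)/(r':ℝ) := by rw [← Finset.mul_sum, ha, mul_one]; ring

lemma aux_norm {k : ℕ} (x : Fin k → ℝ) {t : ℝ} (ht : 1 ≤ t)
    (h : (∑ i, |x i| ^ t) ^ (1/t) = 1) : ∑ i, |x i| ^ t = 1 := by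
  have ht0 : (0:ℝ) < t := by linarith
  have hS : 0 ≤ ∑ i, |x i| ^ t := Finset.sum_nonneg fun i _ => Real.rpow_nonneg (abs_nonneg _) _
  have h2 : (∑ i, |x i| ^ t) = ((∑ i, |x i| ^ t) ^ (1/t)) ^ t := by
    rw [← Real.rpow_mul hS, one_div_mul_cancel ht0.ne', Real.rpow_one]
  rw [h2, h, Real.one_rpow]

/-- Upper bounds for the `(p,q)`-spectral radius in terms of the maximum
out-degree `Δ⁺` and maximum in-degree `Δ⁻`: if `r/p + s/q ≥ 1` then
`λ_{p,q}(G) ≤ (Δ⁺/r)^{r/p}(Δ⁻/s)^{s/q}`, and if `r/p + s/q < 1` then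
`λ_{p,q}(G) ≤ |E(G)|^{1−(r/p+s/q)} (Δ⁺/r)^{r/p}(Δ⁻/s)^{s/q}`. -/
theorem specRad_upper_max_degree (m n N r s : ℕ) (hr : 0 < r) (hs : 0 < s)
    (G : DirectedHypergraph m n N r s) (p q : ℝ) (hp : 1 ≤ p) (hq : 1 ≤ q)
    (Δp Δn : ℕ) (hΔp : ∀ u, G.outDeg u ≤ Δp) (hΔn : ∀ v, G.inDeg v ≤ Δn) :
    (1 ≤ (r : ℝ) / p + (s : ℝ) / q →
      G.specRad p q ≤ ((Δp : ℝ) / (r : ℝ)) ^ ((r : ℝ) / p) *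
        ((Δn : ℝ) / (s : ℝ)) ^ ((s : ℝ) / q)) ∧
    ((r : ℝ) / p + (s : ℝ) / q < 1 →
      G.specRad p q ≤ (N : ℝ) ^ (1 - ((r : ℝ) / p + (s : ℝ) / q)) *
        ((Δp : ℝ) / (r : ℝ)) ^ ((r : ℝ) / p) *
        ((Δn : ℝ) / (s : ℝ)) ^ ((s : ℝ) / q)) := by
  classical
  have hp0 : (0:ℝ) < p := by linarith
  have hq0 : (0:ℝ) < q := by linarith
  have hr0 : (0:ℝ) < (r:ℝ) := by exact_mod_cast hr
  have hs0 : (0:ℝ) < (s:ℝ) := by exact_mod_cast hs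
  have hc0 : 0 < (r:ℝ)/p := div_pos hr0 hp0
  have hd0 : 0 < (s:ℝ)/q := div_pos hs0 hq0
  have common : ∀ (x : Fin m → ℝ) (y : Fin n → ℝ),
      DirectedHypergraph.pnorm p x = 1 → DirectedHypergraph.pnorm q y = 1 →
      ∃ P Q : Fin N → ℝ, (∀ e, 0 ≤ P e) ∧ (∀ e, 0 ≤ Q e) ∧
        (∑ e, P e) ≤ (Δp:ℝ)/(r:ℝ) ∧ (∑ e, Q e) ≤ (Δn:ℝ)/(s:ℝ) ∧
        G.polyForm x y ≤ ∑ e, P e ^ ((r:ℝ)/p) * Q e ^ ((s:ℝ)/q) := by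
    intro x y hx hy
    have hxs : ∑ i, |x i| ^ p = 1 := aux_norm x hp (by simpa [DirectedHypergraph.pnorm] using hx)
    have hys : ∑ i, |y i| ^ q = 1 := aux_norm y hq (by simpa [DirectedHypergraph.pnorm] using hy)
    refine ⟨fun e => (∏ u ∈ G.tail e, |x u|) ^ (p/(r:ℝ)),
            fun e => (∏ v ∈ G.head e, |y v|) ^ (q/(s:ℝ)), ?_, ?_, ?_, ?_, ?_⟩
    · intro e; exact Real.rpow_nonneg (Finset.prod_nonneg fun u _ => abs_nonneg _) _
    · intro e; exact Real.rpow_nonneg (Finset.prod_nonneg fun v _ => abs_nonneg _) _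
    · exact aux_key G.tail hr G.tail_card Δp hΔp (fun u => |x u|) (fun u => abs_nonneg _) hp0 hxs
    · exact aux_key G.head hs G.head_card Δn hΔn (fun v => |y v|) (fun v => abs_nonneg _) hq0 hys
    · unfold DirectedHypergraph.polyForm
      refine Finset.sum_le_sum fun e _ => ?_
      have hA : (0:ℝ) ≤ ∏ u ∈ G.tail e, |x u| := Finset.prod_nonneg fun u _ => abs_nonneg _
      have hB : (0:ℝ) ≤ ∏ v ∈ G.head e, |y v| := Finset.prod_nonneg fun v _ => abs_nonneg _
      have hpr : p/(r:ℝ) * ((r:ℝ)/p) = 1 := by field_simp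
      have hqs : q/(s:ℝ) * ((s:ℝ)/q) = 1 := by field_simp
      have e1 : ((∏ u ∈ G.tail e, |x u|) ^ (p/(r:ℝ))) ^ ((r:ℝ)/p) = ∏ u ∈ G.tail e, |x u| := by
        rw [← Real.rpow_mul hA, hpr, Real.rpow_one]
      have e2 : ((∏ v ∈ G.head e, |y v|) ^ (q/(s:ℝ))) ^ ((s:ℝ)/q) = ∏ v ∈ G.head e, |y v| := by
        rw [← Real.rpow_mul hB, hqs, Real.rpow_one]
      calc (∏ u ∈ G.tail e, x u) * ∏ v ∈ G.head e, y v
          ≤ |(∏ u ∈ G.tail e, x u) * ∏ v ∈ G.head e, y v| := le_abs_self _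
        _ = (∏ u ∈ G.tail e, |x u|) * ∏ v ∈ G.head e, |y v| := by
            rw [abs_mul, Finset.abs_prod, Finset.abs_prod]
        _ = ((∏ u ∈ G.tail e, |x u|) ^ (p/(r:ℝ))) ^ ((r:ℝ)/p) *
              ((∏ v ∈ G.head e, |y v|) ^ (q/(s:ℝ))) ^ ((s:ℝ)/q) := by rw [e1, e2]
  constructor
  · intro hσ
    refine Real.sSup_le ?_ (by positivity)
    rintro z ⟨x, y, hx, hy, rfl⟩
    obtain ⟨P, Q, hP, hQ, hSP, hSQ, hpoly⟩ := common x y hx hy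
    exact hpoly.trans (aux_case1 P Q hP hQ hc0 hd0 hσ hSP hSQ)
  · intro hσ
    refine Real.sSup_le ?_ (by positivity)
    rintro z ⟨x, y, hx, hy, rfl⟩
    obtain ⟨P, Q, hP, hQ, hSP, hSQ, hpoly⟩ := common x y hx hy
    exact hpoly.trans (aux_case2 P Q hP hQ hc0 hd0 hσ hSP hSQ)
end

section
/- Let G be an (r,s)-directed hypergraph. If r/p + s/q ≥ 1, then λ_{p,q}(G) ≤ (1/(r^{r/p} s^{s/q})) · max_{e∈E(G)} { ∏_{u∈T(e)} (d_u⁺)^{1/p} ∏_{v∈H(e)} (d_v⁻)^{1/q} }. If r/p + s/q < 1, then λ_{p,q}(G) ≤ (|E(G)|^{1−(r/p+s/q)}/(r^{r/p} s^{s/q})) · max_{e∈E(G)} { ∏_{u∈T(e)} (d_u⁺)^{1/p} ∏_{v∈H(e)} (d_v⁻)^{1/q} }. -/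
open Finset in

private lemma aux_K_ge_one {N : ℕ} (A B : Fin N → ℝ) (hA : ∀ e, 0 ≤ A e)
    (hB : ∀ e, 0 ≤ B e) (hAs : ∑ e, A e ≤ 1) (hBs : ∑ e, B e ≤ 1)
    (α β : ℝ) (hα : 0 < α) (hβ : 0 < β) (ht : 1 ≤ α + β) :
    ∑ e, A e ^ α * B e ^ β ≤ 1 := by
  set t := α + β with htdef
  have ht0 : (0:ℝ) < t := by linarith
  have hA1 : ∀ e, A e ≤ 1 := fun e =>
    le_trans (Finset.single_le_sum (fun i _ => hA i) (Finset.mem_univ e)) hAs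
  have hB1 : ∀ e, B e ≤ 1 := fun e =>
    le_trans (Finset.single_le_sum (fun i _ => hB i) (Finset.mem_univ e)) hBs
  have key : ∀ e, A e ^ α * B e ^ β ≤ α/t * A e + β/t * B e := by
    intro e
    have hz : 0 ≤ A e ^ (α/t) * B e ^ (β/t) :=
      mul_nonneg (Real.rpow_nonneg (hA e) _) (Real.rpow_nonneg (hB e) _)
    have hz1 : A e ^ (α/t) * B e ^ (β/t) ≤ 1 := by
      have h1 := Real.rpow_le_one (hA e) (hA1 e) (by positivity : (0:ℝ) ≤ α/t)
      have h2 := Real.rpow_le_one (hB e) (hB1 e) (by positivity : (0:ℝ) ≤ β/t)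
      nlinarith [Real.rpow_nonneg (hA e) (α/t), Real.rpow_nonneg (hB e) (β/t)]
    have heq : A e ^ α * B e ^ β = (A e ^ (α/t) * B e ^ (β/t)) ^ t := by
      rw [Real.mul_rpow (Real.rpow_nonneg (hA e) _) (Real.rpow_nonneg (hB e) _),
        ← Real.rpow_mul (hA e), ← Real.rpow_mul (hB e),
        div_mul_cancel₀ _ ht0.ne', div_mul_cancel₀ _ ht0.ne']
    have hpow : (A e ^ (α/t) * B e ^ (β/t)) ^ t ≤ A e ^ (α/t) * B e ^ (β/t) := by
      rcases eq_or_lt_of_le hz with h0 | hpos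
      · rw [← h0, Real.zero_rpow ht0.ne']
      · calc (A e ^ (α/t) * B e ^ (β/t)) ^ t
            ≤ (A e ^ (α/t) * B e ^ (β/t)) ^ (1:ℝ) :=
              Real.rpow_le_rpow_of_exponent_ge hpos hz1 ht
          _ = _ := Real.rpow_one _
    have hAM : A e ^ (α/t) * B e ^ (β/t) ≤ α/t * A e + β/t * B e :=
      Real.geom_mean_le_arith_mean2_weighted (by positivity) (by positivity)
        (hA e) (hB e) (by field_simp; exact htdef.symm)
    calc A e ^ α * B e ^ β = (A e ^ (α/t) * B e ^ (β/t)) ^ t := heq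
      _ ≤ A e ^ (α/t) * B e ^ (β/t) := hpow
      _ ≤ _ := hAM
  calc ∑ e, A e ^ α * B e ^ β ≤ ∑ e, (α/t * A e + β/t * B e) :=
        Finset.sum_le_sum fun e _ => key e
    _ = α/t * (∑ e, A e) + β/t * (∑ e, B e) := by
        rw [Finset.sum_add_distrib, ← Finset.mul_sum, ← Finset.mul_sum]
    _ ≤ α/t * 1 + β/t * 1 := by
        gcongr
    _ = 1 := by field_simp; exact htdef.symm

private lemma aux_K_lt_one {N : ℕ} (hN : 0 < N) (A B : Fin N → ℝ) (hA : ∀ e, 0 ≤ A e)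
    (hB : ∀ e, 0 ≤ B e) (hAs : ∑ e, A e ≤ 1) (hBs : ∑ e, B e ≤ 1)
    (α β : ℝ) (hα : 0 < α) (hβ : 0 < β) (ht : α + β < 1) :
    ∑ e, A e ^ α * B e ^ β ≤ (N:ℝ) ^ (1 - (α + β)) := by
  set t := α + β with htdef
  have ht0 : (0:ℝ) < t := by linarith
  have hNr : (0:ℝ) < (N:ℝ) := Nat.cast_pos.mpr hN
  have hfact : (N:ℝ)^(1-t) = (N:ℝ)^(-t) * (N:ℝ) := by
    rw [sub_eq_add_neg, add_comm, Real.rpow_add hNr, Real.rpow_one]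
  have key : ∀ e, A e ^ α * B e ^ β
      ≤ ((N:ℝ) ^ (1-t)) * (α * A e + β * B e) + (N:ℝ) ^ (-t) * (1 - t) := by
    intro e
    have hAM : ((N:ℝ) * A e) ^ α * ((N:ℝ) * B e) ^ β * (1:ℝ) ^ (1-t)
        ≤ α * ((N:ℝ) * A e) + β * ((N:ℝ) * B e) + (1-t) * 1 :=
      Real.geom_mean_le_arith_mean3_weighted hα.le hβ.le (by linarith)
        (mul_nonneg hNr.le (hA e)) (mul_nonneg hNr.le (hB e)) zero_le_one
        (by rw [htdef]; ring)
    have heq : ((N:ℝ) * A e) ^ α * ((N:ℝ) * B e) ^ β * (1:ℝ) ^ (1-t)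
        = (N:ℝ) ^ t * (A e ^ α * B e ^ β) := by
      rw [Real.one_rpow, mul_one, Real.mul_rpow hNr.le (hA e),
        Real.mul_rpow hNr.le (hB e), htdef, Real.rpow_add hNr]
      ring
    have h2 : (N:ℝ) ^ t * (A e ^ α * B e ^ β)
        ≤ α * ((N:ℝ) * A e) + β * ((N:ℝ) * B e) + (1-t) * 1 := heq ▸ hAM
    have hNt : (0:ℝ) < (N:ℝ) ^ t := Real.rpow_pos_of_pos hNr t
    have h3 : A e ^ α * B e ^ β
        ≤ (N:ℝ)^(-t) * (α * ((N:ℝ) * A e) + β * ((N:ℝ) * B e) + (1-t)) := by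
      rw [Real.rpow_neg hNr.le, ← div_eq_inv_mul, le_div_iff₀ hNt, mul_comm]
      linarith
    calc A e ^ α * B e ^ β
        ≤ (N:ℝ)^(-t) * (α * ((N:ℝ) * A e) + β * ((N:ℝ) * B e) + (1-t)) := h3
      _ = ((N:ℝ) ^ (1-t)) * (α * A e + β * B e) + (N:ℝ) ^ (-t) * (1 - t) := by
          rw [hfact]; ring
  calc ∑ e, A e ^ α * B e ^ β
      ≤ ∑ e, (((N:ℝ) ^ (1-t)) * (α * A e + β * B e) + (N:ℝ) ^ (-t) * (1 - t)) :=
        Finset.sum_le_sum fun e _ => key e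
    _ = (N:ℝ)^(1-t) * (α * (∑ e, A e) + β * (∑ e, B e))
          + (N:ℝ) * ((N:ℝ)^(-t) * (1-t)) := by
        simp only [Finset.sum_add_distrib, Finset.sum_const, Finset.card_univ,
          Fintype.card_fin, nsmul_eq_mul, mul_add, ← Finset.mul_sum]
    _ ≤ (N:ℝ)^(1-t) * (α * 1 + β * 1) + (N:ℝ) * ((N:ℝ)^(-t) * (1-t)) := by
        have hpos : (0:ℝ) < (N:ℝ)^(1-t) := Real.rpow_pos_of_pos hNr _
        gcongr
    _ = (N:ℝ)^(1-t) := by rw [hfact, htdef]; ring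

open Finset in

private lemma aux_double_count {ι κ : Type*} [Fintype ι] [Fintype κ] [DecidableEq κ]
    (T : ι → Finset κ) (a : κ → ℝ) (ha : ∀ u, 0 ≤ a u) (hsum : ∑ u, a u = 1) :
    ∑ e, ∑ u ∈ T e, a u / ((Finset.univ.filter fun e => u ∈ T e).card : ℝ) ≤ 1 := by
  classical
  have h1 : ∀ e : ι, ∑ u ∈ T e, a u / ((Finset.univ.filter fun e => u ∈ T e).card : ℝ)
      = ∑ u : κ, if u ∈ T e then a u / ((Finset.univ.filter fun e => u ∈ T e).card : ℝ) else 0 := by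
    intro e
    rw [Finset.sum_ite_mem, Finset.univ_inter]
  calc ∑ e, ∑ u ∈ T e, a u / ((Finset.univ.filter fun e => u ∈ T e).card : ℝ)
      = ∑ u : κ, ∑ e : ι, if u ∈ T e then a u / ((Finset.univ.filter fun e => u ∈ T e).card : ℝ) else 0 := by
        simp_rw [h1]; exact Finset.sum_comm
    _ ≤ ∑ u : κ, a u := by
        apply Finset.sum_le_sum
        intro u _
        rw [← Finset.sum_filter, Finset.sum_const, nsmul_eq_mul]
        rcases Nat.eq_zero_or_pos (Finset.univ.filter fun e => u ∈ T e).card with h0 | hpos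
        · rw [h0]; simpa using ha u
        · rw [mul_div_cancel₀]
          exact Nat.cast_ne_zero.mpr hpos.ne'
    _ = 1 := hsum

private lemma aux_prod_edge {κ : Type*} [DecidableEq κ] (T : Finset κ) (r : ℕ)
    (hT : T.card = r) (hr : 0 < r) (p : ℝ) (hp : 1 ≤ p)
    (a : κ → ℝ) (ha : ∀ u, 0 ≤ a u) (d : κ → ℝ) (hd : ∀ u ∈ T, 1 ≤ d u) :
    ∏ u ∈ T, (a u) ^ (1/p) ≤
      (∏ u ∈ T, (d u) ^ (1/p)) * ((∑ u ∈ T, a u / d u) ^ ((r:ℝ)/p) / (r:ℝ) ^ ((r:ℝ)/p)) := by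
  have hp0 : (0:ℝ) < p := lt_of_lt_of_le one_pos hp
  have hz : ∀ u ∈ T, 0 ≤ a u / d u := fun u hu =>
    div_nonneg (ha u) (le_trans zero_le_one (hd u hu))
  have hA : 0 ≤ ∑ u ∈ T, a u / d u := Finset.sum_nonneg hz
  have hsplit : ∏ u ∈ T, (a u) ^ (1/p)
      = (∏ u ∈ T, (d u) ^ (1/p)) * ∏ u ∈ T, (a u / d u) ^ (1/p) := by
    rw [← Finset.prod_mul_distrib]
    apply Finset.prod_congr rfl
    intro u hu
    rw [← Real.mul_rpow (le_trans zero_le_one (hd u hu)) (hz u hu),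
      mul_div_cancel₀ _ (by linarith [hd u hu] : d u ≠ 0)]
  rw [hsplit]
  apply mul_le_mul_of_nonneg_left _ (Finset.prod_nonneg fun u hu =>
    Real.rpow_nonneg (le_trans zero_le_one (hd u hu)) _)
  have hAM : ∏ u ∈ T, (a u / d u) ^ ((1:ℝ)/r) ≤ (∑ u ∈ T, a u / d u) / r := by
    have := Real.geom_mean_le_arith_mean_weighted T (fun _ => (1:ℝ)/r) (fun u => a u / d u)
      (fun i _ => by positivity) (by
        rw [Finset.sum_const, hT, nsmul_eq_mul, mul_one_div,
          div_self (Nat.cast_ne_zero.mpr hr.ne')]) hz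
    calc ∏ u ∈ T, (a u / d u) ^ ((1:ℝ)/r) ≤ ∑ u ∈ T, (1:ℝ)/r * (a u / d u) := this
      _ = (∑ u ∈ T, a u / d u) / r := by rw [← Finset.mul_sum]; ring
  have hrw : ∏ u ∈ T, (a u / d u) ^ (1/p)
      = (∏ u ∈ T, (a u / d u) ^ ((1:ℝ)/r)) ^ ((r:ℝ)/p) := by
    rw [← Real.finset_prod_rpow T _ (fun u hu => Real.rpow_nonneg (hz u hu) _)]
    apply Finset.prod_congr rfl
    intro u hu
    rw [← Real.rpow_mul (hz u hu)]
    congr 1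
    have : (r:ℝ) ≠ 0 := Nat.cast_ne_zero.mpr hr.ne'
    field_simp
  rw [hrw, ← Real.div_rpow hA (Nat.cast_nonneg r)]
  exact Real.rpow_le_rpow
    (Finset.prod_nonneg fun u hu => Real.rpow_nonneg (hz u hu) _) hAM (by positivity)

private lemma aux_polyForm_le {m n N r s : ℕ} (hr : 0 < r) (hs : 0 < s) (hN : 0 < N)
    (G : DirectedHypergraph m n N r s) (p q : ℝ) (hp : 1 ≤ p) (hq : 1 ≤ q)
    (K : ℝ)
    (hK : ∀ A B : Fin N → ℝ, (∀ e, 0 ≤ A e) → (∀ e, 0 ≤ B e) →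
      ∑ e, A e ≤ 1 → ∑ e, B e ≤ 1 →
      ∑ e, (A e) ^ ((r:ℝ)/p) * (B e) ^ ((s:ℝ)/q) ≤ K)
    (x : Fin m → ℝ) (y : Fin n → ℝ) (hx : DirectedHypergraph.pnorm p x = 1)
    (hy : DirectedHypergraph.pnorm q y = 1) :
    G.polyForm x y ≤ K / ((r:ℝ) ^ ((r:ℝ)/p) * (s:ℝ) ^ ((s:ℝ)/q)) *
      Finset.univ.sup' ⟨(⟨0, hN⟩ : Fin N), Finset.mem_univ _⟩
        (fun e => (∏ u ∈ G.tail e, (G.outDeg u : ℝ) ^ (1/p)) *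
          ∏ v ∈ G.head e, (G.inDeg v : ℝ) ^ (1/q)) := by
  classical
  have hp0 : (0:ℝ) < p := lt_of_lt_of_le one_pos hp
  have hq0 : (0:ℝ) < q := lt_of_lt_of_le one_pos hq
  set Md := Finset.univ.sup' ⟨(⟨0, hN⟩ : Fin N), Finset.mem_univ _⟩
      (fun e => (∏ u ∈ G.tail e, (G.outDeg u : ℝ) ^ (1/p)) *
        ∏ v ∈ G.head e, (G.inDeg v : ℝ) ^ (1/q)) with hMddef
  set Rc := (r:ℝ) ^ ((r:ℝ)/p) * (s:ℝ) ^ ((s:ℝ)/q) with hRcdef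
  have hRc : 0 < Rc := by
    rw [hRcdef]
    have h1 : (0:ℝ) < (r:ℝ) := Nat.cast_pos.mpr hr
    have h2 : (0:ℝ) < (s:ℝ) := Nat.cast_pos.mpr hs
    positivity
  have hFnn : ∀ e : Fin N, 0 ≤ (∏ u ∈ G.tail e, (G.outDeg u : ℝ) ^ (1/p)) *
      ∏ v ∈ G.head e, (G.inDeg v : ℝ) ^ (1/q) := by
    intro e
    apply mul_nonneg <;>
      exact Finset.prod_nonneg fun u _ => Real.rpow_nonneg (Nat.cast_nonneg _) _
  have hFle : ∀ e : Fin N, (∏ u ∈ G.tail e, (G.outDeg u : ℝ) ^ (1/p)) *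
      (∏ v ∈ G.head e, (G.inDeg v : ℝ) ^ (1/q)) ≤ Md :=
    fun e => Finset.le_sup'
      (f := fun e => (∏ u ∈ G.tail e, (G.outDeg u : ℝ) ^ (1/p)) *
        ∏ v ∈ G.head e, (G.inDeg v : ℝ) ^ (1/q)) (Finset.mem_univ e)
  have hMd : 0 ≤ Md := le_trans (hFnn ⟨0, hN⟩) (hFle ⟨0, hN⟩)
  -- norm conditions
  have hSx : 0 ≤ ∑ i, |x i| ^ p := Finset.sum_nonneg fun i _ => Real.rpow_nonneg (abs_nonneg _) _
  have hSy : 0 ≤ ∑ i, |y i| ^ q := Finset.sum_nonneg fun i _ => Real.rpow_nonneg (abs_nonneg _) _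
  have hx' : ((∑ i, |x i| ^ p) ^ (1/p) : ℝ) = 1 := hx
  have hy' : ((∑ i, |y i| ^ q) ^ (1/q) : ℝ) = 1 := hy
  have hx1 : ∑ i, |x i| ^ p = 1 := by
    have h : (((∑ i, |x i| ^ p) ^ (1/p)) ^ p : ℝ) = 1 := by rw [hx', Real.one_rpow]
    rwa [← Real.rpow_mul hSx, one_div, inv_mul_cancel₀ hp0.ne', Real.rpow_one] at h
  have hy1 : ∑ i, |y i| ^ q = 1 := by
    have h : (((∑ i, |y i| ^ q) ^ (1/q)) ^ q : ℝ) = 1 := by rw [hy', Real.one_rpow]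
    rwa [← Real.rpow_mul hSy, one_div, inv_mul_cancel₀ hq0.ne', Real.rpow_one] at h
  -- A and B
  set A : Fin N → ℝ := fun e => ∑ u ∈ G.tail e, |x u| ^ p / (G.outDeg u : ℝ) with hAdef
  set B : Fin N → ℝ := fun e => ∑ v ∈ G.head e, |y v| ^ q / (G.inDeg v : ℝ) with hBdef
  have hdegT : ∀ e : Fin N, ∀ u ∈ G.tail e, (1:ℝ) ≤ (G.outDeg u : ℝ) := by
    intro e u hu
    have : 0 < G.outDeg u := Finset.card_pos.mpr ⟨e, Finset.mem_filter.mpr ⟨Finset.mem_univ e, hu⟩⟩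
    exact_mod_cast this
  have hdegH : ∀ e : Fin N, ∀ v ∈ G.head e, (1:ℝ) ≤ (G.inDeg v : ℝ) := by
    intro e v hv
    have : 0 < G.inDeg v := Finset.card_pos.mpr ⟨e, Finset.mem_filter.mpr ⟨Finset.mem_univ e, hv⟩⟩
    exact_mod_cast this
  have hA0 : ∀ e, 0 ≤ A e := fun e => Finset.sum_nonneg fun u hu =>
    div_nonneg (Real.rpow_nonneg (abs_nonneg _) _) (Nat.cast_nonneg _)
  have hB0 : ∀ e, 0 ≤ B e := fun e => Finset.sum_nonneg fun v hv =>
    div_nonneg (Real.rpow_nonneg (abs_nonneg _) _) (Nat.cast_nonneg _)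
  have hAs : ∑ e, A e ≤ 1 :=
    aux_double_count G.tail (fun u => |x u| ^ p)
      (fun u => Real.rpow_nonneg (abs_nonneg _) _) hx1
  have hBs : ∑ e, B e ≤ 1 :=
    aux_double_count G.head (fun v => |y v| ^ q)
      (fun v => Real.rpow_nonneg (abs_nonneg _) _) hy1
  -- per-edge bound
  have hedge : ∀ e : Fin N, (∏ u ∈ G.tail e, x u) * (∏ v ∈ G.head e, y v)
      ≤ Md * ((A e) ^ ((r:ℝ)/p) * (B e) ^ ((s:ℝ)/q) / Rc) := by
    intro e
    have h1 : (∏ u ∈ G.tail e, x u) * (∏ v ∈ G.head e, y v)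
        ≤ (∏ u ∈ G.tail e, |x u|) * (∏ v ∈ G.head e, |y v|) := by
      calc (∏ u ∈ G.tail e, x u) * (∏ v ∈ G.head e, y v)
          ≤ |(∏ u ∈ G.tail e, x u) * (∏ v ∈ G.head e, y v)| := le_abs_self _
        _ = (∏ u ∈ G.tail e, |x u|) * (∏ v ∈ G.head e, |y v|) := by
            rw [abs_mul, Finset.abs_prod, Finset.abs_prod]
    have hxa : ∀ u : Fin m, |x u| = (|x u| ^ p) ^ (1/p) := by
      intro u
      rw [← Real.rpow_mul (abs_nonneg _), mul_one_div, div_self hp0.ne', Real.rpow_one]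
    have hya : ∀ v : Fin n, |y v| = (|y v| ^ q) ^ (1/q) := by
      intro v
      rw [← Real.rpow_mul (abs_nonneg _), mul_one_div, div_self hq0.ne', Real.rpow_one]
    have h2 : ∏ u ∈ G.tail e, |x u|
        ≤ (∏ u ∈ G.tail e, (G.outDeg u : ℝ) ^ (1/p)) * ((A e) ^ ((r:ℝ)/p) / (r:ℝ) ^ ((r:ℝ)/p)) := by
      calc ∏ u ∈ G.tail e, |x u| = ∏ u ∈ G.tail e, (|x u| ^ p) ^ (1/p) :=
            Finset.prod_congr rfl fun u _ => hxa u
        _ ≤ _ := aux_prod_edge (G.tail e) r (G.tail_card e) hr p hp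
            (fun u => |x u| ^ p) (fun u => Real.rpow_nonneg (abs_nonneg _) _)
            (fun u => (G.outDeg u : ℝ)) (hdegT e)
    have h3 : ∏ v ∈ G.head e, |y v|
        ≤ (∏ v ∈ G.head e, (G.inDeg v : ℝ) ^ (1/q)) * ((B e) ^ ((s:ℝ)/q) / (s:ℝ) ^ ((s:ℝ)/q)) := by
      calc ∏ v ∈ G.head e, |y v| = ∏ v ∈ G.head e, (|y v| ^ q) ^ (1/q) :=
            Finset.prod_congr rfl fun v _ => hya v
        _ ≤ _ := aux_prod_edge (G.head e) s (G.head_card e) hs q hq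
            (fun v => |y v| ^ q) (fun v => Real.rpow_nonneg (abs_nonneg _) _)
            (fun v => (G.inDeg v : ℝ)) (hdegH e)
    have h4 : (∏ u ∈ G.tail e, |x u|) * (∏ v ∈ G.head e, |y v|)
        ≤ ((∏ u ∈ G.tail e, (G.outDeg u : ℝ) ^ (1/p)) * ((A e) ^ ((r:ℝ)/p) / (r:ℝ) ^ ((r:ℝ)/p)))
          * ((∏ v ∈ G.head e, (G.inDeg v : ℝ) ^ (1/q)) * ((B e) ^ ((s:ℝ)/q) / (s:ℝ) ^ ((s:ℝ)/q))) := by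
      apply mul_le_mul h2 h3 (Finset.prod_nonneg fun v _ => abs_nonneg _)
      apply mul_nonneg (Finset.prod_nonneg fun u _ => Real.rpow_nonneg (Nat.cast_nonneg _) _)
      apply div_nonneg (Real.rpow_nonneg (hA0 e) _) (Real.rpow_nonneg (Nat.cast_nonneg _) _)
    have h5 : ((∏ u ∈ G.tail e, (G.outDeg u : ℝ) ^ (1/p)) * ((A e) ^ ((r:ℝ)/p) / (r:ℝ) ^ ((r:ℝ)/p)))
          * ((∏ v ∈ G.head e, (G.inDeg v : ℝ) ^ (1/q)) * ((B e) ^ ((s:ℝ)/q) / (s:ℝ) ^ ((s:ℝ)/q)))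
        = ((∏ u ∈ G.tail e, (G.outDeg u : ℝ) ^ (1/p)) * (∏ v ∈ G.head e, (G.inDeg v : ℝ) ^ (1/q)))
          * ((A e) ^ ((r:ℝ)/p) * (B e) ^ ((s:ℝ)/q) / Rc) := by
      rw [hRcdef]; field_simp
    have h6 : ((∏ u ∈ G.tail e, (G.outDeg u : ℝ) ^ (1/p)) * (∏ v ∈ G.head e, (G.inDeg v : ℝ) ^ (1/q)))
          * ((A e) ^ ((r:ℝ)/p) * (B e) ^ ((s:ℝ)/q) / Rc)
        ≤ Md * ((A e) ^ ((r:ℝ)/p) * (B e) ^ ((s:ℝ)/q) / Rc) := by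
      apply mul_le_mul_of_nonneg_right (hFle e)
      apply div_nonneg (mul_nonneg (Real.rpow_nonneg (hA0 e) _) (Real.rpow_nonneg (hB0 e) _)) hRc.le
    calc (∏ u ∈ G.tail e, x u) * (∏ v ∈ G.head e, y v)
        ≤ (∏ u ∈ G.tail e, |x u|) * (∏ v ∈ G.head e, |y v|) := h1
      _ ≤ _ := h4
      _ = _ := h5
      _ ≤ _ := h6
  -- sum up
  calc G.polyForm x y = ∑ e, (∏ u ∈ G.tail e, x u) * (∏ v ∈ G.head e, y v) := rfl
    _ ≤ ∑ e, Md * ((A e) ^ ((r:ℝ)/p) * (B e) ^ ((s:ℝ)/q) / Rc) :=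
        Finset.sum_le_sum fun e _ => hedge e
    _ = Md / Rc * ∑ e, (A e) ^ ((r:ℝ)/p) * (B e) ^ ((s:ℝ)/q) := by
        rw [Finset.mul_sum]
        apply Finset.sum_congr rfl
        intro e _
        ring
    _ ≤ Md / Rc * K := by
        apply mul_le_mul_of_nonneg_left (hK A B hA0 hB0 hAs hBs) (div_nonneg hMd hRc.le)
    _ = K / Rc * Md := by ring

/-- Degree-product upper bounds: with
`M = max_{e∈E(G)} ∏_{u∈T(e)} (d_u⁺)^{1/p} ∏_{v∈H(e)} (d_v⁻)^{1/q}`, if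
`r/p + s/q ≥ 1` then `λ_{p,q}(G) ≤ M/(r^{r/p} s^{s/q})`, and if `r/p + s/q < 1`
then `λ_{p,q}(G) ≤ |E(G)|^{1−(r/p+s/q)} M/(r^{r/p} s^{s/q})`. -/
theorem specRad_upper_degree_products (m n N r s : ℕ) (hr : 0 < r) (hs : 0 < s)
    (hN : 0 < N) (G : DirectedHypergraph m n N r s)
    (p q : ℝ) (hp : 1 ≤ p) (hq : 1 ≤ q) :
    (1 ≤ (r : ℝ) / p + (s : ℝ) / q →
      G.specRad p q ≤ 1 / ((r : ℝ) ^ ((r : ℝ) / p) * (s : ℝ) ^ ((s : ℝ) / q)) *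
        Finset.univ.sup' ⟨(⟨0, hN⟩ : Fin N), Finset.mem_univ _⟩
          (fun e => (∏ u ∈ G.tail e, (G.outDeg u : ℝ) ^ (1 / p)) *
            ∏ v ∈ G.head e, (G.inDeg v : ℝ) ^ (1 / q))) ∧
    ((r : ℝ) / p + (s : ℝ) / q < 1 →
      G.specRad p q ≤ (N : ℝ) ^ (1 - ((r : ℝ) / p + (s : ℝ) / q)) /
          ((r : ℝ) ^ ((r : ℝ) / p) * (s : ℝ) ^ ((s : ℝ) / q)) *
        Finset.univ.sup' ⟨(⟨0, hN⟩ : Fin N), Finset.mem_univ _⟩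
          (fun e => (∏ u ∈ G.tail e, (G.outDeg u : ℝ) ^ (1 / p)) *
            ∏ v ∈ G.head e, (G.inDeg v : ℝ) ^ (1 / q))) := by
  have hp0 : (0:ℝ) < p := lt_of_lt_of_le one_pos hp
  have hq0 : (0:ℝ) < q := lt_of_lt_of_le one_pos hq
  have hα : (0:ℝ) < (r:ℝ)/p := div_pos (Nat.cast_pos.mpr hr) hp0
  have hβ : (0:ℝ) < (s:ℝ)/q := div_pos (Nat.cast_pos.mpr hs) hq0
  have hRc : (0:ℝ) < (r:ℝ) ^ ((r:ℝ)/p) * (s:ℝ) ^ ((s:ℝ)/q) := by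
    have h1 : (0:ℝ) < (r:ℝ) := Nat.cast_pos.mpr hr
    have h2 : (0:ℝ) < (s:ℝ) := Nat.cast_pos.mpr hs
    positivity
  have hMd : 0 ≤ Finset.univ.sup' ⟨(⟨0, hN⟩ : Fin N), Finset.mem_univ _⟩
      (fun e => (∏ u ∈ G.tail e, (G.outDeg u : ℝ) ^ (1 / p)) *
        ∏ v ∈ G.head e, (G.inDeg v : ℝ) ^ (1 / q)) := by
    refine le_trans ?_ (Finset.le_sup'
      (f := fun e => (∏ u ∈ G.tail e, (G.outDeg u : ℝ) ^ (1 / p)) *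
        ∏ v ∈ G.head e, (G.inDeg v : ℝ) ^ (1 / q)) (Finset.mem_univ (⟨0, hN⟩ : Fin N)))
    exact mul_nonneg (Finset.prod_nonneg fun u _ => Real.rpow_nonneg (Nat.cast_nonneg _) _)
      (Finset.prod_nonneg fun v _ => Real.rpow_nonneg (Nat.cast_nonneg _) _)
  constructor
  · intro ht
    rw [DirectedHypergraph.specRad]
    apply Real.sSup_le
    · rintro z ⟨x, y, hx, hy, rfl⟩
      exact aux_polyForm_le hr hs hN G p q hp hq 1
        (fun A B hA hB hAs hBs => aux_K_ge_one A B hA hB hAs hBs _ _ hα hβ ht) x y hx hy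
    · exact mul_nonneg (by positivity) hMd
  · intro ht
    rw [DirectedHypergraph.specRad]
    apply Real.sSup_le
    · rintro z ⟨x, y, hx, hy, rfl⟩
      exact aux_polyForm_le hr hs hN G p q hp hq ((N:ℝ) ^ (1 - ((r:ℝ)/p + (s:ℝ)/q)))
        (fun A B hA hB hAs hBs => aux_K_lt_one hN A B hA hB hAs hBs _ _ hα hβ ht) x y hx hy
    · have hNr : (0:ℝ) < (N:ℝ) := Nat.cast_pos.mpr hN
      exact mul_nonneg (by positivity) hMd
end

section
/- Let G be an (r,s)-directed hypergraph with r/p + s/q < 1 admitting an elliptic consistently α-normal labeling with arc weights {w(e)}. Then for every arc e, [α (δ⁺)^{r/p}(δ⁻)^{s/q}]^{1/(1−(r/p+s/q))} ≤ w(e) ≤ [α (Δ⁺)^{r/p}(Δ⁻)^{s/q}]^{1/(1−(r/p+s/q))}. -/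
/-- Bounds on the arc weights of an elliptic consistently `α`-normal labeling:
if `r/p + s/q < 1`, then for every arc `e`,
`(α (δ⁺)^{r/p}(δ⁻)^{s/q})^{1/(1−(r/p+s/q))} ≤ w(e) ≤ (α (Δ⁺)^{r/p}(Δ⁻)^{s/q})^{1/(1−(r/p+s/q))}`. -/
theorem weight_bounds_of_elliptic_consistent_normal (m n N r s : ℕ)
    (G : DirectedHypergraph m n N r s) (p q α : ℝ) (hp : 1 ≤ p) (hq : 1 ≤ q)
    (hell : (r : ℝ) / p + (s : ℝ) / q < 1) (hα : 0 < α)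
    (Bt : Fin m → Fin N → ℝ) (Bh : Fin n → Fin N → ℝ) (w : Fin N → ℝ)
    (hw_pos : ∀ e, 0 < w e) (hw_sum : ∑ e, w e = 1)
    (hBt_pos : ∀ u e, u ∈ G.tail e → 0 < Bt u e)
    (hBt_zero : ∀ u e, u ∉ G.tail e → Bt u e = 0)
    (hBh_pos : ∀ v e, v ∈ G.head e → 0 < Bh v e)
    (hBh_zero : ∀ v e, v ∉ G.head e → Bh v e = 0)
    (hrow_t : ∀ u, ∑ e, Bt u e = 1)
    (hrow_h : ∀ v, ∑ e, Bh v e = 1)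
    (hnormal : ∀ e, w e ^ (1 - ((r : ℝ) / p + (s : ℝ) / q)) *
        ((∏ u ∈ G.tail e, Bt u e ^ (1 / p)) *
          ∏ v ∈ G.head e, Bh v e ^ (1 / q)) = α)
    (hcons_t : ∀ u e f, u ∈ G.tail e → u ∈ G.tail f →
      w e * Bt u f = w f * Bt u e)
    (hcons_h : ∀ v e f, v ∈ G.head e → v ∈ G.head f →
      w e * Bh v f = w f * Bh v e)
    (δp δn Δp Δn : ℕ)
    (hδp : ∀ u, δp ≤ G.outDeg u) (hδn : ∀ v, δn ≤ G.inDeg v)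
    (hΔp : ∀ u, G.outDeg u ≤ Δp) (hΔn : ∀ v, G.inDeg v ≤ Δn) :
    ∀ e, (α * (δp : ℝ) ^ ((r : ℝ) / p) * (δn : ℝ) ^ ((s : ℝ) / q)) ^
        (1 / (1 - ((r : ℝ) / p + (s : ℝ) / q))) ≤ w e ∧
      w e ≤ (α * (Δp : ℝ) ^ ((r : ℝ) / p) * (Δn : ℝ) ^ ((s : ℝ) / q)) ^
        (1 / (1 - ((r : ℝ) / p + (s : ℝ) / q))) := by

  classical
  have hp0 : (0:ℝ) < p := lt_of_lt_of_le one_pos hp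
  have hq0 : (0:ℝ) < q := lt_of_lt_of_le one_pos hq
  set β : ℝ := (r:ℝ)/p + (s:ℝ)/q with hβdef
  have hβ0 : 0 ≤ β := by positivity
  have h1β : 0 < 1 - β := by linarith
  have hN : 0 < N := by
    rcases Nat.eq_zero_or_pos N with h | h
    · subst h; simp at hw_sum
    · exact h
  have : Nonempty (Fin N) := ⟨⟨0, hN⟩⟩
  set S : Fin m → ℝ := fun u => ∑ f ∈ Finset.univ.filter (fun f => u ∈ G.tail f), w f with hSdef
  set T : Fin n → ℝ := fun v => ∑ f ∈ Finset.univ.filter (fun f => v ∈ G.head f), w f with hTdef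
  have hSpos : ∀ u e, u ∈ G.tail e → 0 < S u := fun u e he =>
    Finset.sum_pos (fun f _ => hw_pos f) ⟨e, by simp [he]⟩
  have hTpos : ∀ v e, v ∈ G.head e → 0 < T v := fun v e he =>
    Finset.sum_pos (fun f _ => hw_pos f) ⟨e, by simp [he]⟩
  -- consistency implies B(u,e) = w(e)/S(u)
  have hBt_eq : ∀ e u, u ∈ G.tail e → Bt u e = w e / S u := by
    intro e u hu
    have key : w e = S u * Bt u e := by
      have h0 : ∑ f ∈ Finset.univ.filter (fun f => u ∈ G.tail f), w e * Bt u f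
          = ∑ f, w e * Bt u f := by
        apply Finset.sum_filter_of_ne
        intro f _ hne
        by_contra hnot
        exact hne (by rw [hBt_zero u f hnot, mul_zero])
      calc w e = w e * ∑ f, Bt u f := by rw [hrow_t u, mul_one]
        _ = ∑ f, w e * Bt u f := by rw [Finset.mul_sum]
        _ = ∑ f ∈ Finset.univ.filter (fun f => u ∈ G.tail f), w e * Bt u f := h0.symm
        _ = ∑ f ∈ Finset.univ.filter (fun f => u ∈ G.tail f), w f * Bt u e := by
            refine Finset.sum_congr rfl fun f hf => ?_
            exact hcons_t u e f hu (by simpa using hf)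
        _ = S u * Bt u e := by rw [hSdef, Finset.sum_mul]
    rw [eq_div_iff (hSpos u e hu).ne']
    linarith [key]
  have hBh_eq : ∀ e v, v ∈ G.head e → Bh v e = w e / T v := by
    intro e v hv
    have key : w e = T v * Bh v e := by
      have h0 : ∑ f ∈ Finset.univ.filter (fun f => v ∈ G.head f), w e * Bh v f
          = ∑ f, w e * Bh v f := by
        apply Finset.sum_filter_of_ne
        intro f _ hne
        by_contra hnot
        exact hne (by rw [hBh_zero v f hnot, mul_zero])
      calc w e = w e * ∑ f, Bh v f := by rw [hrow_h v, mul_one]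
        _ = ∑ f, w e * Bh v f := by rw [Finset.mul_sum]
        _ = ∑ f ∈ Finset.univ.filter (fun f => v ∈ G.head f), w e * Bh v f := h0.symm
        _ = ∑ f ∈ Finset.univ.filter (fun f => v ∈ G.head f), w f * Bh v e := by
            refine Finset.sum_congr rfl fun f hf => ?_
            exact hcons_h v e f hv (by simpa using hf)
        _ = T v * Bh v e := by rw [hTdef, Finset.sum_mul]
    rw [eq_div_iff (hTpos v e hv).ne']
    linarith [key]
  -- fixed point equation
  have hfix : ∀ e, w e = α * ((∏ u ∈ G.tail e, S u ^ (1/p)) * ∏ v ∈ G.head e, T v ^ (1/q)) := by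
    intro e
    have hP : 0 < ∏ u ∈ G.tail e, S u ^ (1/p) :=
      Finset.prod_pos fun u hu => Real.rpow_pos_of_pos (hSpos u e hu) _
    have hQ : 0 < ∏ v ∈ G.head e, T v ^ (1/q) :=
      Finset.prod_pos fun v hv => Real.rpow_pos_of_pos (hTpos v e hv) _
    have ht : (∏ u ∈ G.tail e, Bt u e ^ (1/p))
        = w e ^ ((r:ℝ)/p) / ∏ u ∈ G.tail e, S u ^ (1/p) := by
      calc (∏ u ∈ G.tail e, Bt u e ^ (1/p))
          = ∏ u ∈ G.tail e, (w e ^ (1/p) / S u ^ (1/p)) := by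
            refine Finset.prod_congr rfl fun u hu => ?_
            rw [hBt_eq e u hu, Real.div_rpow (hw_pos e).le (hSpos u e hu).le]
        _ = (∏ u ∈ G.tail e, w e ^ (1/p)) / ∏ u ∈ G.tail e, S u ^ (1/p) :=
            Finset.prod_div_distrib _ _
        _ = w e ^ ((r:ℝ)/p) / ∏ u ∈ G.tail e, S u ^ (1/p) := by
            rw [Finset.prod_const, G.tail_card e, ← Real.rpow_natCast (w e ^ (1/p)) r,
              ← Real.rpow_mul (hw_pos e).le, one_div_mul_eq_div]
    have hh : (∏ v ∈ G.head e, Bh v e ^ (1/q))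
        = w e ^ ((s:ℝ)/q) / ∏ v ∈ G.head e, T v ^ (1/q) := by
      calc (∏ v ∈ G.head e, Bh v e ^ (1/q))
          = ∏ v ∈ G.head e, (w e ^ (1/q) / T v ^ (1/q)) := by
            refine Finset.prod_congr rfl fun v hv => ?_
            rw [hBh_eq e v hv, Real.div_rpow (hw_pos e).le (hTpos v e hv).le]
        _ = (∏ v ∈ G.head e, w e ^ (1/q)) / ∏ v ∈ G.head e, T v ^ (1/q) :=
            Finset.prod_div_distrib _ _
        _ = w e ^ ((s:ℝ)/q) / ∏ v ∈ G.head e, T v ^ (1/q) := by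
            rw [Finset.prod_const, G.head_card e, ← Real.rpow_natCast (w e ^ (1/q)) s,
              ← Real.rpow_mul (hw_pos e).le, one_div_mul_eq_div]
    have hw1 : w e ^ (1-β) * (w e ^ ((r:ℝ)/p) * w e ^ ((s:ℝ)/q)) = w e := by
      rw [← Real.rpow_add (hw_pos e), ← Real.rpow_add (hw_pos e)]
      have : (1-β) + ((r:ℝ)/p + (s:ℝ)/q) = 1 := by rw [hβdef]; ring
      rw [this, Real.rpow_one]
    have hne := hnormal e
    rw [ht, hh] at hne
    calc w e = w e ^ (1-β) * (w e ^ ((r:ℝ)/p) * w e ^ ((s:ℝ)/q)) := hw1.symm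
      _ = (w e ^ (1-β) * ((w e ^ ((r:ℝ)/p) / ∏ u ∈ G.tail e, S u ^ (1/p)) *
            (w e ^ ((s:ℝ)/q) / ∏ v ∈ G.head e, T v ^ (1/q)))) *
          ((∏ u ∈ G.tail e, S u ^ (1/p)) * ∏ v ∈ G.head e, T v ^ (1/q)) := by
          field_simp
      _ = α * ((∏ u ∈ G.tail e, S u ^ (1/p)) * ∏ v ∈ G.head e, T v ^ (1/q)) := by
          rw [hne]
  intro e
  constructor
  · -- lower bound via the minimal weight
    obtain ⟨e0, -, hmin⟩ := Finset.exists_min_image Finset.univ w Finset.univ_nonempty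
    have hmin' : ∀ f, w e0 ≤ w f := fun f => hmin f (Finset.mem_univ f)
    have hSlb : ∀ u, u ∈ G.tail e0 → (δp:ℝ) * w e0 ≤ S u := by
      intro u hu
      have h1 : (G.outDeg u : ℝ) * w e0 ≤ S u := by
        have := Finset.card_nsmul_le_sum (Finset.univ.filter fun f => u ∈ G.tail f) w (w e0)
          (fun f _ => hmin' f)
        simpa [DirectedHypergraph.outDeg, nsmul_eq_mul, hSdef] using this
      have h2 : (δp:ℝ) * w e0 ≤ (G.outDeg u:ℝ) * w e0 :=
        mul_le_mul_of_nonneg_right (Nat.cast_le.mpr (hδp u)) (hw_pos e0).le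
      linarith
    have hTlb : ∀ v, v ∈ G.head e0 → (δn:ℝ) * w e0 ≤ T v := by
      intro v hv
      have h1 : (G.inDeg v : ℝ) * w e0 ≤ T v := by
        have := Finset.card_nsmul_le_sum (Finset.univ.filter fun f => v ∈ G.head f) w (w e0)
          (fun f _ => hmin' f)
        simpa [DirectedHypergraph.inDeg, nsmul_eq_mul, hTdef] using this
      have h2 : (δn:ℝ) * w e0 ≤ (G.inDeg v:ℝ) * w e0 :=
        mul_le_mul_of_nonneg_right (Nat.cast_le.mpr (hδn v)) (hw_pos e0).le
      linarith
    have hbp : (0:ℝ) ≤ (δp:ℝ) * w e0 := mul_nonneg (Nat.cast_nonneg _) (hw_pos e0).le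
    have hbn : (0:ℝ) ≤ (δn:ℝ) * w e0 := mul_nonneg (Nat.cast_nonneg _) (hw_pos e0).le
    have hPlb : ((δp:ℝ) * w e0) ^ ((r:ℝ)/p) ≤ ∏ u ∈ G.tail e0, S u ^ (1/p) := by
      calc ((δp:ℝ) * w e0) ^ ((r:ℝ)/p)
          = ∏ _u ∈ G.tail e0, ((δp:ℝ) * w e0) ^ (1/p) := by
            rw [Finset.prod_const, G.tail_card, ← Real.rpow_natCast (((δp:ℝ) * w e0) ^ (1/p)) r,
              ← Real.rpow_mul hbp, one_div_mul_eq_div]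
        _ ≤ ∏ u ∈ G.tail e0, S u ^ (1/p) :=
            Finset.prod_le_prod (fun u _ => Real.rpow_nonneg hbp _)
              (fun u hu => Real.rpow_le_rpow hbp (hSlb u hu) (one_div_nonneg.mpr hp0.le))
    have hQlb : ((δn:ℝ) * w e0) ^ ((s:ℝ)/q) ≤ ∏ v ∈ G.head e0, T v ^ (1/q) := by
      calc ((δn:ℝ) * w e0) ^ ((s:ℝ)/q)
          = ∏ _v ∈ G.head e0, ((δn:ℝ) * w e0) ^ (1/q) := by
            rw [Finset.prod_const, G.head_card, ← Real.rpow_natCast (((δn:ℝ) * w e0) ^ (1/q)) s,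
              ← Real.rpow_mul hbn, one_div_mul_eq_div]
        _ ≤ ∏ v ∈ G.head e0, T v ^ (1/q) :=
            Finset.prod_le_prod (fun v _ => Real.rpow_nonneg hbn _)
              (fun v hv => Real.rpow_le_rpow hbn (hTlb v hv) (one_div_nonneg.mpr hq0.le))
    set c : ℝ := α * (δp:ℝ) ^ ((r:ℝ)/p) * (δn:ℝ) ^ ((s:ℝ)/q) with hcdef
    have hc0 : 0 ≤ c := by positivity
    have hstep : c * w e0 ^ β ≤ w e0 := by
      have hP0 : (0:ℝ) ≤ ∏ u ∈ G.tail e0, S u ^ (1/p) :=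
        le_of_lt (Finset.prod_pos fun u hu => Real.rpow_pos_of_pos (hSpos u e0 hu) _)
      have h2 : α * (((δp:ℝ) * w e0) ^ ((r:ℝ)/p) * ((δn:ℝ) * w e0) ^ ((s:ℝ)/q))
          = c * w e0 ^ β := by
        rw [Real.mul_rpow (Nat.cast_nonneg δp) (hw_pos e0).le,
          Real.mul_rpow (Nat.cast_nonneg δn) (hw_pos e0).le, hcdef, hβdef,
          Real.rpow_add (hw_pos e0)]
        ring
      calc c * w e0 ^ β
          = α * (((δp:ℝ) * w e0) ^ ((r:ℝ)/p) * ((δn:ℝ) * w e0) ^ ((s:ℝ)/q)) := h2.symm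
        _ ≤ α * ((∏ u ∈ G.tail e0, S u ^ (1/p)) * ∏ v ∈ G.head e0, T v ^ (1/q)) :=
            mul_le_mul_of_nonneg_left
              (mul_le_mul hPlb hQlb (Real.rpow_nonneg hbn _) hP0) hα.le
        _ = w e0 := (hfix e0).symm
    have hwsplit : w e0 ^ (1-β) * w e0 ^ β = w e0 := by
      rw [← Real.rpow_add (hw_pos e0)]
      have h : (1-β) + β = 1 := by ring
      rw [h, Real.rpow_one]
    have hcle : c ≤ w e0 ^ (1-β) := by
      have hx : 0 < w e0 ^ β := Real.rpow_pos_of_pos (hw_pos e0) _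
      refine le_of_mul_le_mul_right ?_ hx
      rw [hwsplit]
      exact hstep
    have hfinal : c ^ (1/(1-β)) ≤ w e0 := by
      calc c ^ (1/(1-β)) ≤ (w e0 ^ (1-β)) ^ (1/(1-β)) :=
            Real.rpow_le_rpow hc0 hcle (one_div_nonneg.mpr h1β.le)
        _ = w e0 := by
            rw [← Real.rpow_mul (hw_pos e0).le, mul_one_div_cancel h1β.ne', Real.rpow_one]
    exact le_trans hfinal (hmin' e)
  · -- upper bound via the maximal weight
    obtain ⟨e0, -, hmax⟩ := Finset.exists_max_image Finset.univ w Finset.univ_nonempty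
    have hmax' : ∀ f, w f ≤ w e0 := fun f => hmax f (Finset.mem_univ f)
    have hSub : ∀ u, u ∈ G.tail e0 → S u ≤ (Δp:ℝ) * w e0 := by
      intro u hu
      have h1 : S u ≤ (G.outDeg u : ℝ) * w e0 := by
        have := Finset.sum_le_card_nsmul (Finset.univ.filter fun f => u ∈ G.tail f) w (w e0)
          (fun f _ => hmax' f)
        simpa [DirectedHypergraph.outDeg, nsmul_eq_mul, hSdef] using this
      have h2 : (G.outDeg u:ℝ) * w e0 ≤ (Δp:ℝ) * w e0 :=
        mul_le_mul_of_nonneg_right (Nat.cast_le.mpr (hΔp u)) (hw_pos e0).le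
      linarith
    have hTub : ∀ v, v ∈ G.head e0 → T v ≤ (Δn:ℝ) * w e0 := by
      intro v hv
      have h1 : T v ≤ (G.inDeg v : ℝ) * w e0 := by
        have := Finset.sum_le_card_nsmul (Finset.univ.filter fun f => v ∈ G.head f) w (w e0)
          (fun f _ => hmax' f)
        simpa [DirectedHypergraph.inDeg, nsmul_eq_mul, hTdef] using this
      have h2 : (G.inDeg v:ℝ) * w e0 ≤ (Δn:ℝ) * w e0 :=
        mul_le_mul_of_nonneg_right (Nat.cast_le.mpr (hΔn v)) (hw_pos e0).le
      linarith
    have hbp : (0:ℝ) ≤ (Δp:ℝ) * w e0 := mul_nonneg (Nat.cast_nonneg _) (hw_pos e0).le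
    have hbn : (0:ℝ) ≤ (Δn:ℝ) * w e0 := mul_nonneg (Nat.cast_nonneg _) (hw_pos e0).le
    have hPub : (∏ u ∈ G.tail e0, S u ^ (1/p)) ≤ ((Δp:ℝ) * w e0) ^ ((r:ℝ)/p) := by
      calc (∏ u ∈ G.tail e0, S u ^ (1/p))
          ≤ ∏ _u ∈ G.tail e0, ((Δp:ℝ) * w e0) ^ (1/p) :=
            Finset.prod_le_prod (fun u hu => Real.rpow_nonneg (hSpos u e0 hu).le _)
              (fun u hu => Real.rpow_le_rpow (hSpos u e0 hu).le (hSub u hu)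
                (one_div_nonneg.mpr hp0.le))
        _ = ((Δp:ℝ) * w e0) ^ ((r:ℝ)/p) := by
            rw [Finset.prod_const, G.tail_card, ← Real.rpow_natCast (((Δp:ℝ) * w e0) ^ (1/p)) r,
              ← Real.rpow_mul hbp, one_div_mul_eq_div]
    have hQub : (∏ v ∈ G.head e0, T v ^ (1/q)) ≤ ((Δn:ℝ) * w e0) ^ ((s:ℝ)/q) := by
      calc (∏ v ∈ G.head e0, T v ^ (1/q))
          ≤ ∏ _v ∈ G.head e0, ((Δn:ℝ) * w e0) ^ (1/q) :=
            Finset.prod_le_prod (fun v hv => Real.rpow_nonneg (hTpos v e0 hv).le _)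
              (fun v hv => Real.rpow_le_rpow (hTpos v e0 hv).le (hTub v hv)
                (one_div_nonneg.mpr hq0.le))
        _ = ((Δn:ℝ) * w e0) ^ ((s:ℝ)/q) := by
            rw [Finset.prod_const, G.head_card, ← Real.rpow_natCast (((Δn:ℝ) * w e0) ^ (1/q)) s,
              ← Real.rpow_mul hbn, one_div_mul_eq_div]
    set c : ℝ := α * (Δp:ℝ) ^ ((r:ℝ)/p) * (Δn:ℝ) ^ ((s:ℝ)/q) with hcdef
    have hc0 : 0 ≤ c := by positivity
    have hstep : w e0 ≤ c * w e0 ^ β := by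
      have hQ0 : (0:ℝ) ≤ ∏ v ∈ G.head e0, T v ^ (1/q) :=
        le_of_lt (Finset.prod_pos fun v hv => Real.rpow_pos_of_pos (hTpos v e0 hv) _)
      have h2 : α * (((Δp:ℝ) * w e0) ^ ((r:ℝ)/p) * ((Δn:ℝ) * w e0) ^ ((s:ℝ)/q))
          = c * w e0 ^ β := by
        rw [Real.mul_rpow (Nat.cast_nonneg Δp) (hw_pos e0).le,
          Real.mul_rpow (Nat.cast_nonneg Δn) (hw_pos e0).le, hcdef, hβdef,
          Real.rpow_add (hw_pos e0)]
        ring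
      calc w e0
          = α * ((∏ u ∈ G.tail e0, S u ^ (1/p)) * ∏ v ∈ G.head e0, T v ^ (1/q)) := hfix e0
        _ ≤ α * (((Δp:ℝ) * w e0) ^ ((r:ℝ)/p) * ((Δn:ℝ) * w e0) ^ ((s:ℝ)/q)) :=
            mul_le_mul_of_nonneg_left
              (mul_le_mul hPub hQub hQ0 (Real.rpow_nonneg hbp _)) hα.le
        _ = c * w e0 ^ β := h2
    have hwsplit : w e0 ^ (1-β) * w e0 ^ β = w e0 := by
      rw [← Real.rpow_add (hw_pos e0)]
      have h : (1-β) + β = 1 := by ring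
      rw [h, Real.rpow_one]
    have hcge : w e0 ^ (1-β) ≤ c := by
      have hx : 0 < w e0 ^ β := Real.rpow_pos_of_pos (hw_pos e0) _
      refine le_of_mul_le_mul_right ?_ hx
      rw [hwsplit]
      exact hstep
    have hfinal : w e0 ≤ c ^ (1/(1-β)) := by
      calc w e0 = (w e0 ^ (1-β)) ^ (1/(1-β)) := by
            rw [← Real.rpow_mul (hw_pos e0).le, mul_one_div_cancel h1β.ne', Real.rpow_one]
        _ ≤ c ^ (1/(1-β)) :=
            Real.rpow_le_rpow (Real.rpow_nonneg (hw_pos e0).le _) hcge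
              (one_div_nonneg.mpr h1β.le)
    exact le_trans (hmax' e) hfinal
end

section
/- For any (r,s)-directed hypergraph G and parameters in the elliptic phase r/p + s/q < 1, the function (p,q) ↦ (r|E(G)|)^{r/p} (s|E(G)|)^{s/q} λ_{p,q}(G) is non-increasing in p and non-increasing in q (on the region where r/p + s/q < 1). -/
namespace DirectedHypergraph

open Finset Real

variable {m n N r s : ℕ}

/-- Jensen's inequality for the logarithm. -/
lemma jensen_log {ι : Type*} (t : Finset ι) (w a : ι → ℝ) (hw : ∀ i ∈ t, 0 < w i)
    (hw1 : ∑ i ∈ t, w i = 1) (ha : ∀ i ∈ t, 0 < a i) :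
    ∑ i ∈ t, w i * Real.log (a i) ≤ Real.log (∑ i ∈ t, w i * a i) := by
  have hprod : ∏ i ∈ t, a i ^ w i ≤ ∑ i ∈ t, w i * a i :=
    Real.geom_mean_le_arith_mean_weighted t w a (fun i hi => (hw i hi).le) hw1
      (fun i hi => (ha i hi).le)
  have hppos : 0 < ∏ i ∈ t, a i ^ w i :=
    Finset.prod_pos fun i hi => Real.rpow_pos_of_pos (ha i hi) _
  calc ∑ i ∈ t, w i * Real.log (a i) = Real.log (∏ i ∈ t, a i ^ w i) := by
        rw [Real.log_prod (fun i hi => (Real.rpow_pos_of_pos (ha i hi) _).ne')]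
        exact (Finset.sum_congr rfl fun i hi => (Real.log_rpow (ha i hi) _)).symm
    _ ≤ _ := Real.log_le_log hppos hprod

lemma sum_abs_rpow_eq_one {k : ℕ} {p : ℝ} (hp : 1 ≤ p) {x : Fin k → ℝ}
    (h : pnorm p x = 1) : ∑ i, |x i| ^ p = 1 := by
  have hp0 : p ≠ 0 := by positivity
  have h0 : (0:ℝ) ≤ ∑ i, |x i| ^ p :=
    Finset.sum_nonneg fun i _ => Real.rpow_nonneg (abs_nonneg _) _
  have h2 := congrArg (fun t : ℝ => t ^ p) h
  simpa [pnorm, ← Real.rpow_natCast, ← Real.rpow_mul h0, one_div,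
    inv_mul_cancel₀ hp0] using h2

lemma exists_pnorm_eq_one {k : ℕ} (hk : 0 < k) {p : ℝ} (hp : 1 ≤ p) :
    ∃ x : Fin k → ℝ, (∀ i, 0 ≤ x i) ∧ pnorm p x = 1 := by
  have hp0 : p ≠ 0 := by positivity
  refine ⟨fun i => if i = ⟨0, hk⟩ then 1 else 0, fun i => by positivity, ?_⟩
  have : ∀ i : Fin k, |(if i = ⟨0, hk⟩ then (1:ℝ) else 0)| ^ p
      = if i = ⟨0, hk⟩ then (1:ℝ) else 0 := by
    intro i; split <;> simp [Real.zero_rpow hp0]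
  simp [pnorm, this]

lemma abs_le_one_of_pnorm {k : ℕ} {p : ℝ} (hp : 1 ≤ p) {x : Fin k → ℝ}
    (h : pnorm p x = 1) (i : Fin k) : |x i| ≤ 1 := by
  have hsum := sum_abs_rpow_eq_one hp h
  have h1 : |x i| ^ p ≤ 1 := by
    rw [← hsum]
    exact Finset.single_le_sum (fun j _ => Real.rpow_nonneg (abs_nonneg _) _)
      (Finset.mem_univ i)
  by_contra hgt
  push_neg at hgt
  have : 1 < |x i| ^ p :=
    (Real.one_lt_rpow_iff_of_pos (lt_trans one_pos hgt)).2
      (Or.inl ⟨hgt, by linarith⟩)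
  linarith

lemma bddAbove_SRset (G : DirectedHypergraph m n N r s) {p q : ℝ} (hp : 1 ≤ p) (hq : 1 ≤ q) :
    BddAbove {z | ∃ x y, pnorm p x = 1 ∧ pnorm q y = 1 ∧ z = G.polyForm x y} := by
  refine ⟨(N : ℝ), ?_⟩
  rintro z ⟨x, y, hx, hy, rfl⟩
  calc G.polyForm x y ≤ ∑ _e : Fin N, (1:ℝ) := by
        refine Finset.sum_le_sum fun e _ => ?_
        calc (∏ u ∈ G.tail e, x u) * ∏ v ∈ G.head e, y v
            ≤ |(∏ u ∈ G.tail e, x u) * ∏ v ∈ G.head e, y v| := le_abs_self _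
          _ = (∏ u ∈ G.tail e, |x u|) * ∏ v ∈ G.head e, |y v| := by
              rw [abs_mul, Finset.abs_prod, Finset.abs_prod]
          _ ≤ 1 := mul_le_one₀
              (Finset.prod_le_one (fun u _ => abs_nonneg _)
                (fun u _ => abs_le_one_of_pnorm hp hx u))
              (Finset.prod_nonneg fun v _ => abs_nonneg _)
              (Finset.prod_le_one (fun v _ => abs_nonneg _)
                (fun v _ => abs_le_one_of_pnorm hq hy v))
    _ = (N : ℝ) := by simp

lemma le_specRad (G : DirectedHypergraph m n N r s) {p q : ℝ} (hp : 1 ≤ p) (hq : 1 ≤ q)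
    {x : Fin m → ℝ} {y : Fin n → ℝ} (hx : pnorm p x = 1) (hy : pnorm q y = 1) :
    G.polyForm x y ≤ G.specRad p q :=
  le_csSup (G.bddAbove_SRset hp hq) ⟨x, y, hx, hy, rfl⟩

lemma specRad_nonneg (G : DirectedHypergraph m n N r s) {p q : ℝ}
    (hm : 0 < m) (hn : 0 < n) (hp : 1 ≤ p) (hq : 1 ≤ q) :
    0 ≤ G.specRad p q := by
  obtain ⟨x, hx0, hx⟩ := exists_pnorm_eq_one hm hp
  obtain ⟨y, hy0, hy⟩ := exists_pnorm_eq_one hn hq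
  refine le_trans ?_ (G.le_specRad hp hq hx hy)
  exact Finset.sum_nonneg fun e _ =>
    mul_nonneg (Finset.prod_nonneg fun u _ => hx0 u) (Finset.prod_nonneg fun v _ => hy0 v)

lemma pnorm_abs {k : ℕ} (p : ℝ) (x : Fin k → ℝ) : pnorm p (fun i => |x i|) = pnorm p x := by
  simp [pnorm, abs_abs]

lemma polyForm_le_abs (G : DirectedHypergraph m n N r s) (x : Fin m → ℝ) (y : Fin n → ℝ) :
    G.polyForm x y ≤ G.polyForm (fun u => |x u|) (fun v => |y v|) := by
  refine Finset.sum_le_sum fun e _ => ?_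
  calc (∏ u ∈ G.tail e, x u) * ∏ v ∈ G.head e, y v
      ≤ |(∏ u ∈ G.tail e, x u) * ∏ v ∈ G.head e, y v| := le_abs_self _
    _ = (∏ u ∈ G.tail e, |x u|) * ∏ v ∈ G.head e, |y v| := by
        rw [abs_mul, Finset.abs_prod, Finset.abs_prod]

lemma sum_tail_swap (G : DirectedHypergraph m n N r s) (f : Fin N → ℝ) :
    ∑ u, ∑ e ∈ Finset.univ.filter (fun e => u ∈ G.tail e), f e = (r:ℝ) * ∑ e, f e := by
  calc ∑ u, ∑ e ∈ Finset.univ.filter (fun e => u ∈ G.tail e), f e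
      = ∑ u, ∑ e, if u ∈ G.tail e then f e else 0 := by
        refine Finset.sum_congr rfl fun u _ => ?_
        rw [Finset.sum_filter]
    _ = ∑ e, ∑ u, if u ∈ G.tail e then f e else 0 := Finset.sum_comm
    _ = ∑ e, (r:ℝ) * f e := by
        refine Finset.sum_congr rfl fun e _ => ?_
        rw [Finset.sum_ite_mem, Finset.univ_inter, Finset.sum_const, G.tail_card,
          nsmul_eq_mul]
    _ = (r:ℝ) * ∑ e, f e := by rw [Finset.mul_sum]

lemma mul_sum_tail_swap (G : DirectedHypergraph m n N r s) (f : Fin N → ℝ) (g : Fin m → ℝ) :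
    ∑ e, f e * ∑ u ∈ G.tail e, g u
      = ∑ u, (∑ e ∈ Finset.univ.filter (fun e => u ∈ G.tail e), f e) * g u := by
  calc ∑ e, f e * ∑ u ∈ G.tail e, g u
      = ∑ e, ∑ u, if u ∈ G.tail e then f e * g u else 0 := by
        refine Finset.sum_congr rfl fun e _ => ?_
        rw [Finset.mul_sum, ← Finset.univ_inter (G.tail e), ← Finset.sum_ite_mem]
        exact Finset.sum_congr rfl fun u _ => by rw [Finset.univ_inter]
    _ = ∑ u, ∑ e, if u ∈ G.tail e then f e * g u else 0 := Finset.sum_comm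
    _ = ∑ u, (∑ e ∈ Finset.univ.filter (fun e => u ∈ G.tail e), f e) * g u := by
        refine Finset.sum_congr rfl fun u _ => ?_
        rw [Finset.sum_filter, Finset.sum_mul]
        exact Finset.sum_congr rfl fun e _ => by split <;> simp

end DirectedHypergraph
namespace DirectedHypergraph

open Finset Real

variable {m n N r s : ℕ}

lemma key (G : DirectedHypergraph m n N r s) {p p' : ℝ} (hp : 1 ≤ p) (hpp' : p ≤ p')
    (hr : 0 < r) {x : Fin m → ℝ} {y : Fin n → ℝ}
    (hx0 : ∀ u, 0 ≤ x u) (hy0 : ∀ v, 0 ≤ y v)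
    (hx : ∑ u, x u ^ p' = 1)
    (hW : 0 < G.polyForm x y) :
    ∃ xh : Fin m → ℝ, pnorm p xh = 1 ∧
      G.polyForm x y ≤ ((r : ℝ) * N) ^ ((r : ℝ)/p - (r : ℝ)/p') * G.polyForm xh y := by
  have hp0 : (0:ℝ) < p := lt_of_lt_of_le one_pos hp
  have hp'0 : (0:ℝ) < p' := lt_of_lt_of_le hp0 hpp'
  have hr0 : (0:ℝ) < (r:ℝ) := by exact_mod_cast hr
  set W := G.polyForm x y with hWdef
  set w : Fin N → ℝ := fun e => (∏ u ∈ G.tail e, x u) * ∏ v ∈ G.head e, y v with hwdef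
  have hw0 : ∀ e, 0 ≤ w e := fun e =>
    mul_nonneg (Finset.prod_nonneg fun u _ => hx0 u) (Finset.prod_nonneg fun v _ => hy0 v)
  have hWsum : ∑ e, w e = W := rfl
  -- positivity of coordinates along positive edges
  have hxpos : ∀ e, 0 < w e → ∀ u ∈ G.tail e, 0 < x u := by
    intro e hwe u hu
    rcases (hx0 u).lt_or_eq with h | h
    · exact h
    · exfalso
      have : w e = 0 := by
        simp only [hwdef]
        exact mul_eq_zero_of_left (Finset.prod_eq_zero hu h.symm) _
      linarith
  have hypos : ∀ e, 0 < w e → ∀ v ∈ G.head e, 0 < y v := by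
    intro e hwe v hv
    rcases (hy0 v).lt_or_eq with h | h
    · exact h
    · exfalso
      have : w e = 0 := by
        simp only [hwdef]
        exact mul_eq_zero_of_right _ (Finset.prod_eq_zero hv h.symm)
      linarith
  -- the support of the edge weights
  set Ep := Finset.univ.filter (fun e => 0 < w e) with hEpdef
  have hEp : ∀ e, e ∈ Ep ↔ 0 < w e := fun e => by simp [hEpdef]
  have hEne : Ep.Nonempty := by
    by_contra h
    rw [Finset.not_nonempty_iff_eq_empty, Finset.filter_eq_empty_iff] at h
    have : W ≤ 0 := by
      rw [← hWsum]
      exact Finset.sum_nonpos fun e _ => le_of_not_gt (h (Finset.mem_univ e))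
    linarith
  have hN0 : 0 < N := hEne.choose.pos
  have hrN : 0 < (r:ℝ) * N := mul_pos hr0 (by exact_mod_cast hN0)
  -- the probability measure on edges
  set μ : Fin N → ℝ := fun e => w e / W with hμdef
  have hμ0 : ∀ e, 0 ≤ μ e := fun e => div_nonneg (hw0 e) hW.le
  have hμpos : ∀ e ∈ Ep, 0 < μ e := fun e he => div_pos ((hEp e).1 he) hW
  have hμ1 : ∑ e, μ e = 1 := by
    simp only [hμdef]
    rw [← Finset.sum_div, hWsum, div_self hW.ne']
  have hμE : ∑ e ∈ Ep, μ e = 1 := by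
    rw [← hμ1]
    exact Finset.sum_filter_of_ne fun e _ hne =>
      (hw0 e).lt_of_ne' (fun h0 => hne (by simp [hμdef, h0]))
  have hμle1 : ∀ e, μ e ≤ 1 := fun e => by
    rw [← hμ1]
    exact Finset.single_le_sum (fun i _ => hμ0 i) (Finset.mem_univ e)
  -- vertex marginals
  set τ : Fin m → ℝ := fun u => ∑ e ∈ Finset.univ.filter (fun e => u ∈ G.tail e), μ e
    with hτdef
  have hτ0 : ∀ u, 0 ≤ τ u := fun u => Finset.sum_nonneg fun e _ => hμ0 e
  have hτsum : ∑ u, τ u = (r:ℝ) := by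
    simp only [hτdef]
    rw [G.sum_tail_swap μ, hμ1, mul_one]
  set pv : Fin m → ℝ := fun u => τ u / r with hpvdef
  have hpv0 : ∀ u, 0 ≤ pv u := fun u => div_nonneg (hτ0 u) hr0.le
  have hpvsum : ∑ u, pv u = 1 := by
    simp only [hpvdef]
    rw [← Finset.sum_div, hτsum, div_self hr0.ne']
  have hτpv : ∀ u, τ u = (r:ℝ) * pv u := fun u => by
    simp only [hpvdef]
    field_simp
  have hμτ : ∀ e ∈ Ep, ∀ u ∈ G.tail e, 0 < τ u := by
    intro e he u hu
    exact lt_of_lt_of_le (hμpos e he)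
      (Finset.single_le_sum (fun i _ => hμ0 i)
        (Finset.mem_filter.2 ⟨Finset.mem_univ e, hu⟩))
  have hpvpos : ∀ e ∈ Ep, ∀ u ∈ G.tail e, 0 < pv u := fun e he u hu =>
    div_pos (hμτ e he u hu) hr0
  -- the new witness
  set xh : Fin m → ℝ := fun u => pv u ^ (1/p : ℝ) with hxhdef
  have hxh0 : ∀ u, 0 ≤ xh u := fun u => Real.rpow_nonneg (hpv0 u) _
  have hxhnorm : pnorm p xh = 1 := by
    have habs : ∀ u : Fin m, |xh u| ^ p = pv u := by
      intro u
      rw [abs_of_nonneg (hxh0 u)]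
      simp only [hxhdef]
      rw [← Real.rpow_mul (hpv0 u), one_div_mul_cancel hp0.ne', Real.rpow_one]
    unfold pnorm
    rw [Finset.sum_congr rfl (fun u _ => habs u), hpvsum, Real.one_rpow]
  set S := G.polyForm xh y with hSdef
  set A : Fin N → ℝ := fun e => (∏ u ∈ G.tail e, xh u) * ∏ v ∈ G.head e, y v with hAdef
  have hSsum : ∑ e, A e = S := rfl
  have hA0 : ∀ e, 0 ≤ A e := fun e =>
    mul_nonneg (Finset.prod_nonneg fun u _ => hxh0 u) (Finset.prod_nonneg fun v _ => hy0 v)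
  have hApos : ∀ e ∈ Ep, 0 < A e := by
    intro e he
    refine mul_pos (Finset.prod_pos fun u hu => ?_) (Finset.prod_pos fun v hv => ?_)
    · exact Real.rpow_pos_of_pos (hpvpos e he u hu) _
    · exact hypos e ((hEp e).1 he) v hv
  have hSpos : 0 < S := by
    obtain ⟨e0, he0⟩ := hEne
    rw [← hSsum]
    exact Finset.sum_pos' (fun e _ => hA0 e) ⟨e0, Finset.mem_univ e0, hApos e0 he0⟩
  -- Step A : log W - log S ≤ ∑ μ log (w/A)
  have hA1 : ∑ e ∈ Ep, μ e * Real.log (A e / μ e) ≤ Real.log S := by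
    have hj := jensen_log Ep μ (fun e => A e / μ e) hμpos hμE
      (fun e he => div_pos (hApos e he) (hμpos e he))
    have hrw : ∑ e ∈ Ep, μ e * (A e / μ e) = ∑ e ∈ Ep, A e :=
      Finset.sum_congr rfl fun e he => by
        rw [mul_comm, div_mul_cancel₀ _ (hμpos e he).ne']
    refine hj.trans (Real.log_le_log ?_ ?_)
    · rw [hrw]
      exact Finset.sum_pos (fun e he => hApos e he) hEne
    · rw [hrw, ← hSsum]
      exact Finset.sum_le_sum_of_subset_of_nonneg (Finset.filter_subset _ _)
        (fun e _ _ => hA0 e)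
  have hWlog : Real.log W = ∑ e ∈ Ep, μ e * Real.log (w e / μ e) := by
    have hc : ∀ e ∈ Ep, μ e * Real.log (w e / μ e) = μ e * Real.log W := by
      intro e he
      have hwne : w e ≠ 0 := ((hEp e).1 he).ne'
      have : w e / μ e = W := by
        simp only [hμdef]
        rw [div_div_eq_mul_div, mul_comm, mul_div_assoc, div_self hwne, mul_one]
      rw [this]
    rw [Finset.sum_congr rfl hc, ← Finset.sum_mul, hμE, one_mul]
  have hstepA : Real.log W - Real.log S ≤ ∑ e ∈ Ep, μ e * Real.log (w e / A e) := by
    have hsplit : ∀ e ∈ Ep, μ e * Real.log (w e / A e)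
        = μ e * Real.log (w e / μ e) - μ e * Real.log (A e / μ e) := by
      intro e he
      have h1 : w e ≠ 0 := ((hEp e).1 he).ne'
      have h2 : A e ≠ 0 := (hApos e he).ne'
      have h3 : μ e ≠ 0 := (hμpos e he).ne'
      rw [Real.log_div h1 h2, Real.log_div h1 h3, Real.log_div h2 h3]
      ring
    rw [Finset.sum_congr rfl hsplit, Finset.sum_sub_distrib, hWlog]
    linarith [hA1]
  -- rewrite per edge
  set g : Fin m → ℝ := fun u => Real.log (x u) - (1/p) * Real.log (pv u) with hgdef
  have hedge : ∀ e ∈ Ep, Real.log (w e / A e) = ∑ u ∈ G.tail e, g u := by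
    intro e he
    have hwe := (hEp e).1 he
    have hyprod : (∏ v ∈ G.head e, y v) ≠ 0 :=
      (Finset.prod_pos fun v hv => hypos e hwe v hv).ne'
    have hq : w e / A e = ∏ u ∈ G.tail e, (x u / xh u) := by
      rw [Finset.prod_div_distrib]
      simp only [hwdef, hAdef]
      rw [mul_div_mul_right _ _ hyprod]
    rw [hq, Real.log_prod (fun u hu =>
      (div_pos (hxpos e hwe u hu) (Real.rpow_pos_of_pos (hpvpos e he u hu) _)).ne')]
    refine Finset.sum_congr rfl fun u hu => ?_
    simp only [hgdef, hxhdef]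
    rw [Real.log_div (hxpos e hwe u hu).ne'
        (Real.rpow_pos_of_pos (hpvpos e he u hu) _).ne',
      Real.log_rpow (hpvpos e he u hu)]
  have hswap : ∑ e ∈ Ep, μ e * Real.log (w e / A e) = ∑ u, τ u * g u := by
    rw [Finset.sum_congr rfl (fun e he => by rw [hedge e he])]
    have h1 : ∑ e ∈ Ep, μ e * ∑ u ∈ G.tail e, g u = ∑ e, μ e * ∑ u ∈ G.tail e, g u :=
      Finset.sum_filter_of_ne fun e _ hne =>
        (hw0 e).lt_of_ne' fun h0 => (left_ne_zero_of_mul hne) (by simp [hμdef, h0])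
    rw [h1, G.mul_sum_tail_swap μ g]
  -- restriction to positive vertices
  set U := Finset.univ.filter (fun u => 0 < τ u) with hUdef
  have hUmem : ∀ u ∈ U, 0 < τ u := fun u hu => (Finset.mem_filter.1 hu).2
  have hxU : ∀ u ∈ U, 0 < x u := by
    intro u hu
    by_contra hle
    push_neg at hle
    have hxu : x u = 0 := le_antisymm hle (hx0 u)
    have : τ u = 0 := by
      simp only [hτdef]
      refine Finset.sum_eq_zero fun e he => ?_
      have hu' : u ∈ G.tail e := (Finset.mem_filter.1 he).2
      have hwe : w e = 0 := by
        simp only [hwdef]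
        exact mul_eq_zero_of_left (Finset.prod_eq_zero hu' hxu) _
      simp [hμdef, hwe]
    linarith [hUmem u hu]
  have hpvU : ∀ u ∈ U, 0 < pv u := fun u hu => div_pos (hUmem u hu) hr0
  have hpvU1 : ∑ u ∈ U, pv u = 1 := by
    rw [← hpvsum]
    exact Finset.sum_filter_of_ne fun u _ hne =>
      (hτ0 u).lt_of_ne' fun h0 => hne (by simp [hpvdef, h0])
  have hresx : ∑ u, τ u * Real.log (x u) = ∑ u ∈ U, τ u * Real.log (x u) :=
    (Finset.sum_filter_of_ne fun u _ hne =>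
      (hτ0 u).lt_of_ne' (left_ne_zero_of_mul hne)).symm
  have hrespv : ∑ u, τ u * Real.log (pv u) = ∑ u ∈ U, τ u * Real.log (pv u) :=
    (Finset.sum_filter_of_ne fun u _ hne =>
      (hτ0 u).lt_of_ne' (left_ne_zero_of_mul hne)).symm
  -- Step E
  have hE : ∑ u, τ u * Real.log (x u) ≤ (1/p') * ∑ u, τ u * Real.log (pv u) := by
    have key2 : ∑ u ∈ U, pv u * Real.log (x u ^ p' / pv u) ≤ 0 := by
      have hj := jensen_log U pv (fun u => x u ^ p' / pv u) hpvU hpvU1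
        (fun u hu => div_pos (Real.rpow_pos_of_pos (hxU u hu) _) (hpvU u hu))
      refine hj.trans (Real.log_nonpos ?_ ?_)
      · exact Finset.sum_nonneg fun u hu => mul_nonneg (hpv0 u)
          (div_nonneg (Real.rpow_nonneg (hx0 u) _) (hpv0 u))
      · have hrw : ∑ u ∈ U, pv u * (x u ^ p' / pv u) = ∑ u ∈ U, x u ^ p' :=
          Finset.sum_congr rfl fun u hu => by
            rw [mul_comm, div_mul_cancel₀ _ (hpvU u hu).ne']
        rw [hrw, ← hx]
        exact Finset.sum_le_sum_of_subset_of_nonneg (Finset.filter_subset _ _)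
          (fun u _ _ => Real.rpow_nonneg (hx0 u) _)
    have hexp : ∀ u ∈ U, pv u * Real.log (x u ^ p' / pv u)
        = p' * (pv u * Real.log (x u)) - pv u * Real.log (pv u) := by
      intro u hu
      rw [Real.log_div (Real.rpow_pos_of_pos (hxU u hu) _).ne' (hpvU u hu).ne',
        Real.log_rpow (hxU u hu)]
      ring
    rw [Finset.sum_congr rfl hexp, Finset.sum_sub_distrib, ← Finset.mul_sum] at key2
    have hτrwx : ∑ u ∈ U, τ u * Real.log (x u) = (r:ℝ) * ∑ u ∈ U, pv u * Real.log (x u) := by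
      rw [Finset.mul_sum]
      exact Finset.sum_congr rfl fun u _ => by rw [hτpv u]; ring
    have hτrwpv : ∑ u ∈ U, τ u * Real.log (pv u) = (r:ℝ) * ∑ u ∈ U, pv u * Real.log (pv u) := by
      rw [Finset.mul_sum]
      exact Finset.sum_congr rfl fun u _ => by rw [hτpv u]; ring
    rw [hresx, hrespv, hτrwx, hτrwpv]
    set Sx := ∑ u ∈ U, pv u * Real.log (x u) with hSx
    set Sp := ∑ u ∈ U, pv u * Real.log (pv u) with hSp
    have h3 : p' * Sx ≤ Sp := by linarith [key2]
    have h4 := mul_le_mul_of_nonneg_left h3 (div_nonneg hr0.le hp'0.le)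
    calc (r:ℝ) * Sx = (r/p') * (p' * Sx) := by field_simp
      _ ≤ (r/p') * Sp := h4
      _ = (1/p') * ((r:ℝ) * Sp) := by ring
  -- Step F
  have hF : -∑ u, τ u * Real.log (pv u) ≤ (r:ℝ) * Real.log ((r:ℝ) * N) := by
    have hterm : ∀ u ∈ U, -(τ u * Real.log (pv u))
        ≤ ∑ e ∈ Finset.univ.filter (fun e => u ∈ G.tail e),
            μ e * Real.log ((r:ℝ) / μ e) := by
      intro u hu
      have hstart : -(τ u * Real.log (pv u))
          = ∑ e ∈ Finset.univ.filter (fun e => u ∈ G.tail e), μ e * (-(Real.log (pv u))) := by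
        simp only [hτdef]
        rw [Finset.sum_mul, ← Finset.sum_neg_distrib]
        exact Finset.sum_congr rfl fun e _ => by ring
      rw [hstart]
      refine Finset.sum_le_sum fun e he => ?_
      rcases (hμ0 e).lt_or_eq with hμe | hμe
      · have hmem : e ∈ Finset.univ.filter (fun e => u ∈ G.tail e) := he
        have h5 : μ e / r ≤ pv u := by
          simp only [hpvdef]
          gcongr
          exact Finset.single_le_sum (fun i _ => hμ0 i) hmem
        have h6 : Real.log (μ e / r) ≤ Real.log (pv u) :=
          Real.log_le_log (div_pos hμe hr0) h5
        have h7 : Real.log (μ e / r) = -Real.log ((r:ℝ)/μ e) := by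
          rw [Real.log_div hμe.ne' hr0.ne', Real.log_div hr0.ne' hμe.ne']
          ring
        have h8 : -Real.log (pv u) ≤ Real.log ((r:ℝ)/μ e) := by
          rw [h7] at h6
          linarith
        exact mul_le_mul_of_nonneg_left h8 hμe.le
      · rw [← hμe]
        simp
    have hinner0 : ∀ u : Fin m, 0 ≤ ∑ e ∈ Finset.univ.filter (fun e => u ∈ G.tail e),
        μ e * Real.log ((r:ℝ)/μ e) := by
      intro u
      refine Finset.sum_nonneg fun e _ => ?_
      rcases (hμ0 e).lt_or_eq with hμe | hμe
      · refine mul_nonneg hμe.le (Real.log_nonneg ?_)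
        rw [one_le_div hμe]
        calc μ e ≤ 1 := hμle1 e
          _ ≤ (r:ℝ) := by exact_mod_cast hr
      · rw [← hμe]
        simp
    have hjF : ∑ e ∈ Ep, μ e * Real.log ((r:ℝ)/μ e) ≤ Real.log ((r:ℝ) * N) := by
      have hj := jensen_log Ep μ (fun e => (r:ℝ)/μ e) hμpos hμE
        (fun e he => div_pos hr0 (hμpos e he))
      have hrw : ∑ e ∈ Ep, μ e * ((r:ℝ)/μ e) = (Ep.card : ℝ) * r := by
        rw [Finset.sum_congr rfl (fun e he => by
          rw [mul_comm, div_mul_cancel₀ _ (hμpos e he).ne']), Finset.sum_const,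
          nsmul_eq_mul]
      refine hj.trans (Real.log_le_log ?_ ?_)
      · rw [hrw]
        exact mul_pos (by exact_mod_cast Finset.card_pos.2 hEne) hr0
      · rw [hrw]
        have hcard : (Ep.card : ℝ) ≤ (N : ℝ) := by
          have := Finset.card_filter_le Finset.univ (fun e => 0 < w e)
          simp only [Finset.card_univ, Fintype.card_fin] at this
          exact_mod_cast this
        nlinarith
    have hEμ2 : ∑ e, μ e * Real.log ((r:ℝ)/μ e) = ∑ e ∈ Ep, μ e * Real.log ((r:ℝ)/μ e) :=
      (Finset.sum_filter_of_ne fun e _ hne =>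
        (hw0 e).lt_of_ne' fun h0 => (left_ne_zero_of_mul hne) (by simp [hμdef, h0])).symm
    calc -∑ u, τ u * Real.log (pv u) = ∑ u ∈ U, -(τ u * Real.log (pv u)) := by
          rw [hrespv, ← Finset.sum_neg_distrib]
      _ ≤ ∑ u ∈ U, ∑ e ∈ Finset.univ.filter (fun e => u ∈ G.tail e),
            μ e * Real.log ((r:ℝ)/μ e) := Finset.sum_le_sum hterm
      _ ≤ ∑ u, ∑ e ∈ Finset.univ.filter (fun e => u ∈ G.tail e),
            μ e * Real.log ((r:ℝ)/μ e) :=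
          Finset.sum_le_sum_of_subset_of_nonneg (Finset.filter_subset _ _)
            (fun u _ _ => hinner0 u)
      _ = (r:ℝ) * ∑ e, μ e * Real.log ((r:ℝ)/μ e) :=
          G.sum_tail_swap (fun e => μ e * Real.log ((r:ℝ)/μ e))
      _ = (r:ℝ) * ∑ e ∈ Ep, μ e * Real.log ((r:ℝ)/μ e) := by rw [hEμ2]
      _ ≤ (r:ℝ) * Real.log ((r:ℝ) * N) := mul_le_mul_of_nonneg_left hjF hr0.le
  -- assemble
  have hgsum : ∑ u, τ u * g u
      = ∑ u, τ u * Real.log (x u) - (1/p) * ∑ u, τ u * Real.log (pv u) := by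
    rw [Finset.mul_sum, ← Finset.sum_sub_distrib]
    exact Finset.sum_congr rfl fun u _ => by simp only [hgdef]; ring
  have hc0 : (0:ℝ) ≤ 1/p - 1/p' := by
    have := one_div_le_one_div_of_le hp0 hpp'
    linarith
  have hlogfinal : Real.log W ≤ ((r:ℝ)/p - (r:ℝ)/p') * Real.log ((r:ℝ)*N) + Real.log S := by
    have h10 : Real.log W - Real.log S
        ≤ ∑ u, τ u * Real.log (x u) - (1/p) * ∑ u, τ u * Real.log (pv u) := by
      rw [← hgsum]
      rw [hswap] at hstepA
      exact hstepA
    have h8 : (1/p - 1/p') * (-∑ u, τ u * Real.log (pv u))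
        ≤ (1/p - 1/p') * ((r:ℝ) * Real.log ((r:ℝ)*N)) :=
      mul_le_mul_of_nonneg_left hF hc0
    have h9 : (1/p - 1/p') * ((r:ℝ) * Real.log ((r:ℝ)*N))
        = ((r:ℝ)/p - (r:ℝ)/p') * Real.log ((r:ℝ)*N) := by ring
    linarith [hE, h10, h8, h9]
  refine ⟨xh, hxhnorm, ?_⟩
  calc W = Real.exp (Real.log W) := (Real.exp_log hW).symm
    _ ≤ Real.exp (((r:ℝ)/p - (r:ℝ)/p') * Real.log ((r:ℝ)*N) + Real.log S) :=
        Real.exp_le_exp.2 hlogfinal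
    _ = ((r:ℝ)*N) ^ ((r:ℝ)/p - (r:ℝ)/p') * S := by
        rw [Real.exp_add, Real.exp_log hSpos, Real.rpow_def_of_pos hrN]
        ring_nf

end DirectedHypergraph
namespace DirectedHypergraph

open Finset Real

variable {m n N r s : ℕ}

lemma one_side (G : DirectedHypergraph m n N r s) {p p' q : ℝ} (hp : 1 ≤ p) (hpp' : p ≤ p')
    (hq : 1 ≤ q) (hm : 0 < m) (hn : 0 < n) :
    G.specRad p' q ≤ ((r:ℝ) * N) ^ ((r:ℝ)/p - (r:ℝ)/p') * G.specRad p q := by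
  have hp' : 1 ≤ p' := hp.trans hpp'
  have hK0 : (0:ℝ) ≤ ((r:ℝ) * N) ^ ((r:ℝ)/p - (r:ℝ)/p') :=
    Real.rpow_nonneg (by positivity) _
  have hlam0 : 0 ≤ G.specRad p q := G.specRad_nonneg hm hn hp hq
  obtain ⟨x0, hx00, hx0n⟩ := exists_pnorm_eq_one hm hp'
  obtain ⟨y0, hy00, hy0n⟩ := exists_pnorm_eq_one hn hq
  refine csSup_le ⟨G.polyForm x0 y0, x0, y0, hx0n, hy0n, rfl⟩ ?_
  rintro z ⟨x, y, hxn, hyn, rfl⟩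
  have habs : G.polyForm x y ≤ G.polyForm (fun u => |x u|) (fun v => |y v|) :=
    G.polyForm_le_abs x y
  rcases le_or_gt (G.polyForm (fun u => |x u|) (fun v => |y v|)) 0 with hle | hpos
  · exact (habs.trans hle).trans (mul_nonneg hK0 hlam0)
  rcases Nat.eq_zero_or_pos r with hr0 | hrpos
  · subst hr0
    have hTail : ∀ e, G.tail e = ∅ := fun e => Finset.card_eq_zero.1 (G.tail_card e)
    obtain ⟨x1, -, hx1n⟩ := exists_pnorm_eq_one hm hp
    have hindep : G.polyForm (fun u => |x u|) (fun v => |y v|)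
        = G.polyForm x1 (fun v => |y v|) := by
      unfold polyForm
      exact Finset.sum_congr rfl fun e _ => by rw [hTail e]; simp
    have h1 : G.polyForm x y ≤ G.specRad p q := by
      calc G.polyForm x y ≤ G.polyForm (fun u => |x u|) (fun v => |y v|) := habs
        _ = G.polyForm x1 (fun v => |y v|) := hindep
        _ ≤ G.specRad p q := G.le_specRad hp hq hx1n (by rw [pnorm_abs]; exact hyn)
    simpa using h1
  · have hxn' : ∑ u, |x u| ^ p' = 1 := sum_abs_rpow_eq_one hp' hxn
    obtain ⟨xh, hxhn, hkey⟩ := G.key hp hpp' hrpos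
      (fun u => abs_nonneg (x u)) (fun v => abs_nonneg (y v)) hxn' hpos
    have h2 : G.polyForm xh (fun v => |y v|) ≤ G.specRad p q :=
      G.le_specRad hp hq hxhn (by rw [pnorm_abs]; exact hyn)
    calc G.polyForm x y ≤ G.polyForm (fun u => |x u|) (fun v => |y v|) := habs
      _ ≤ ((r:ℝ) * N) ^ ((r:ℝ)/p - (r:ℝ)/p') * G.polyForm xh (fun v => |y v|) := hkey
      _ ≤ ((r:ℝ) * N) ^ ((r:ℝ)/p - (r:ℝ)/p') * G.specRad p q :=
          mul_le_mul_of_nonneg_left h2 hK0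

def transposeG (G : DirectedHypergraph m n N r s) : DirectedHypergraph n m N s r :=
  ⟨G.head, G.tail, G.head_card, G.tail_card⟩

lemma polyForm_transpose (G : DirectedHypergraph m n N r s) (x : Fin m → ℝ) (y : Fin n → ℝ) :
    (transposeG G).polyForm y x = G.polyForm x y :=
  Finset.sum_congr rfl fun e _ => mul_comm _ _

lemma specRad_transpose (G : DirectedHypergraph m n N r s) (p q : ℝ) :
    (transposeG G).specRad q p = G.specRad p q := by
  unfold specRad
  congr 1
  ext z
  constructor
  · rintro ⟨yy, xx, hy, hx, rfl⟩
    exact ⟨xx, yy, hx, hy, G.polyForm_transpose xx yy⟩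
  · rintro ⟨xx, yy, hx, hy, rfl⟩
    exact ⟨yy, xx, hy, hx, (G.polyForm_transpose xx yy).symm⟩

lemma specRad_zero_m (G : DirectedHypergraph m n N r s) (hm : m = 0) {p q : ℝ}
    (hp : 1 ≤ p) : G.specRad p q = 0 := by
  have hp0 : p ≠ 0 := by positivity
  unfold specRad
  convert Real.sSup_empty
  ext z
  simp only [Set.mem_setOf_eq, Set.mem_empty_iff_false, iff_false]
  rintro ⟨x, y, hx, -, -⟩
  subst hm
  unfold pnorm at hx
  simp only [Finset.univ_eq_empty, Finset.sum_empty, one_div] at hx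
  rw [Real.zero_rpow (inv_ne_zero hp0)] at hx
  exact zero_ne_one hx

lemma specRad_zero_n (G : DirectedHypergraph m n N r s) (hn : n = 0) {p q : ℝ}
    (hq : 1 ≤ q) : G.specRad p q = 0 := by
  have hq0 : q ≠ 0 := by positivity
  unfold specRad
  convert Real.sSup_empty
  ext z
  simp only [Set.mem_setOf_eq, Set.mem_empty_iff_false, iff_false]
  rintro ⟨x, y, -, hy, -⟩
  subst hn
  unfold pnorm at hy
  simp only [Finset.univ_eq_empty, Finset.sum_empty, one_div] at hy
  rw [Real.zero_rpow (inv_ne_zero hq0)] at hy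
  exact zero_ne_one hy

lemma specRad_zero_N (G : DirectedHypergraph m n N r s) (hN : N = 0) (hm : 0 < m)
    (hn : 0 < n) {p q : ℝ} (hp : 1 ≤ p) (hq : 1 ≤ q) : G.specRad p q = 0 := by
  unfold specRad
  have hset : {z | ∃ x y, pnorm p x = 1 ∧ pnorm q y = 1 ∧ z = G.polyForm x y} = {0} := by
    ext z
    simp only [Set.mem_setOf_eq, Set.mem_singleton_iff]
    constructor
    · rintro ⟨x, y, hx, hy, rfl⟩
      subst hN
      unfold polyForm
      simp
    · rintro rfl
      obtain ⟨x0, -, hx0n⟩ := exists_pnorm_eq_one hm hp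
      obtain ⟨y0, -, hy0n⟩ := exists_pnorm_eq_one hn hq
      refine ⟨x0, y0, hx0n, hy0n, ?_⟩
      subst hN
      unfold polyForm
      simp
  rw [hset, csSup_singleton]

end DirectedHypergraph

/-- In the elliptic phase `r/p + s/q < 1`, the function
`(p,q) ↦ (r|E(G)|)^{r/p} (s|E(G)|)^{s/q} λ_{p,q}(G)` is non-increasing in `p`
and in `q`. -/
theorem specRad_scaled_antitone (m n N r s : ℕ)
    (G : DirectedHypergraph m n N r s) (p q p' q' : ℝ)
    (hp : 1 ≤ p) (hq : 1 ≤ q) (hpp' : p ≤ p') (hqq' : q ≤ q')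
    (he : (r : ℝ) / p + (s : ℝ) / q < 1) :
    ((r : ℝ) * (N : ℝ)) ^ ((r : ℝ) / p') * ((s : ℝ) * (N : ℝ)) ^ ((s : ℝ) / q') *
        G.specRad p' q' ≤
      ((r : ℝ) * (N : ℝ)) ^ ((r : ℝ) / p) * ((s : ℝ) * (N : ℝ)) ^ ((s : ℝ) / q) *
        G.specRad p q := by
  have hp' : 1 ≤ p' := hp.trans hpp'
  have hq' : 1 ≤ q' := hq.trans hqq'
  rcases Nat.eq_zero_or_pos m with hm | hm
  · rw [G.specRad_zero_m hm hp', G.specRad_zero_m hm hp]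
    simp
  rcases Nat.eq_zero_or_pos n with hn | hn
  · rw [G.specRad_zero_n hn hq', G.specRad_zero_n hn hq]
    simp
  rcases Nat.eq_zero_or_pos N with hN | hN
  · rw [G.specRad_zero_N hN hm hn hp' hq', G.specRad_zero_N hN hm hn hp hq]
    simp
  have h1 : G.specRad p' q' ≤ ((r:ℝ) * N) ^ ((r:ℝ)/p - (r:ℝ)/p') * G.specRad p q' :=
    G.one_side hp hpp' hq' hm hn
  have h2 : G.specRad p q' ≤ ((s:ℝ) * N) ^ ((s:ℝ)/q - (s:ℝ)/q') * G.specRad p q := by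
    rw [← G.specRad_transpose p q', ← G.specRad_transpose p q]
    exact (DirectedHypergraph.transposeG G).one_side hq hqq' hp hn hm
  have hKx0 : (0:ℝ) ≤ ((r:ℝ) * N) ^ ((r:ℝ)/p - (r:ℝ)/p') :=
    Real.rpow_nonneg (by positivity) _
  have hchain : G.specRad p' q' ≤ ((r:ℝ) * N) ^ ((r:ℝ)/p - (r:ℝ)/p') *
      (((s:ℝ) * N) ^ ((s:ℝ)/q - (s:ℝ)/q') * G.specRad p q) :=
    h1.trans (mul_le_mul_of_nonneg_left h2 hKx0)
  have hAB0 : (0:ℝ) ≤ ((r:ℝ) * N) ^ ((r:ℝ)/p') * ((s:ℝ) * N) ^ ((s:ℝ)/q') :=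
    mul_nonneg (Real.rpow_nonneg (by positivity) _) (Real.rpow_nonneg (by positivity) _)
  refine le_trans (mul_le_mul_of_nonneg_left hchain hAB0) (le_of_eq ?_)
  have hA : ((r:ℝ)*N) ^ ((r:ℝ)/p') * ((r:ℝ)*N) ^ ((r:ℝ)/p - (r:ℝ)/p')
      = ((r:ℝ)*N) ^ ((r:ℝ)/p) := by
    rcases Nat.eq_zero_or_pos r with h0 | hpos
    · subst h0
      simp
    · have hrN : (0:ℝ) < (r:ℝ) * N :=
        mul_pos (by exact_mod_cast hpos) (by exact_mod_cast hN)
      rw [← Real.rpow_add hrN]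
      congr 1
      ring
  have hB : ((s:ℝ)*N) ^ ((s:ℝ)/q') * ((s:ℝ)*N) ^ ((s:ℝ)/q - (s:ℝ)/q')
      = ((s:ℝ)*N) ^ ((s:ℝ)/q) := by
    rcases Nat.eq_zero_or_pos s with h0 | hpos
    · subst h0
      simp
    · have hsN : (0:ℝ) < (s:ℝ) * N :=
        mul_pos (by exact_mod_cast hpos) (by exact_mod_cast hN)
      rw [← Real.rpow_add hsN]
      congr 1
      ring
  calc ((r:ℝ)*N) ^ ((r:ℝ)/p') * ((s:ℝ)*N) ^ ((s:ℝ)/q') *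
        (((r:ℝ) * N) ^ ((r:ℝ)/p - (r:ℝ)/p') *
          (((s:ℝ) * N) ^ ((s:ℝ)/q - (s:ℝ)/q') * G.specRad p q))
      = (((r:ℝ)*N) ^ ((r:ℝ)/p') * ((r:ℝ)*N) ^ ((r:ℝ)/p - (r:ℝ)/p')) *
        ((((s:ℝ)*N) ^ ((s:ℝ)/q') * ((s:ℝ)*N) ^ ((s:ℝ)/q - (s:ℝ)/q'))) * G.specRad p q := by
        ring
    _ = ((r:ℝ)*N) ^ ((r:ℝ)/p) * ((s:ℝ)*N) ^ ((s:ℝ)/q) * G.specRad p q := by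
        rw [hA, hB]
end

section
/- For any (r,s)-directed hypergraph G with r/p + s/q < 1, the function (1/p, 1/q) ↦ log λ_{p,q}(G) is convex (concave upward) on the region {(1/p,1/q) : p,q ≥ 1, r/p + s/q < 1}; that is, for (1/p,1/q) = μ(1/p₁,1/q₁) + (1−μ)(1/p₂,1/q₂) with 0 ≤ μ ≤ 1, log λ_{p,q}(G) ≤ μ log λ_{p₁,q₁}(G) + (1−μ) log λ_{p₂,q₂}(G). -/
namespace SpecAux

open DirectedHypergraph Finset

lemma sum_eq_one {k : ℕ} {p : ℝ} (hp : 0 < p) {x : Fin k → ℝ}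
    (h : pnorm p x = 1) : ∑ i, |x i| ^ p = 1 := by
  set S := ∑ i, |x i| ^ p with hS
  have hS0 : 0 ≤ S := Finset.sum_nonneg fun i _ => Real.rpow_nonneg (abs_nonneg _) _
  have h' : S ^ (1 / p) = 1 := h
  calc S = S ^ ((1/p) * p) := by rw [one_div_mul_cancel hp.ne', Real.rpow_one]
    _ = (S ^ (1/p)) ^ p := Real.rpow_mul hS0 _ _
    _ = 1 := by rw [h', Real.one_rpow]

lemma pnorm_eq_one {k : ℕ} {p : ℝ} {x : Fin k → ℝ}
    (h : ∑ i, |x i| ^ p = 1) : pnorm p x = 1 := by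
  rw [pnorm, h, Real.one_rpow]

lemma abs_le_one {k : ℕ} {p : ℝ} (hp : 0 < p) {x : Fin k → ℝ}
    (h : ∑ i, |x i| ^ p = 1) (i : Fin k) : |x i| ≤ 1 := by
  by_contra hc
  push_neg at hc
  have h1 : (1:ℝ) < |x i| ^ p :=
    (Real.one_lt_rpow_iff_of_pos (by linarith)).2 (Or.inl ⟨hc, hp⟩)
  have h2 : |x i| ^ p ≤ ∑ j, |x j| ^ p :=
    Finset.single_le_sum (fun j _ => Real.rpow_nonneg (abs_nonneg _) _) (Finset.mem_univ i)
  rw [h] at h2; linarith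

variable {m n N r s : ℕ} (G : DirectedHypergraph m n N r s)

lemma polyForm_le_card {p q : ℝ} (hp : 0 < p) (hq : 0 < q)
    {x : Fin m → ℝ} {y : Fin n → ℝ}
    (hx : ∑ i, |x i| ^ p = 1) (hy : ∑ i, |y i| ^ q = 1) :
    G.polyForm x y ≤ N := by
  have : G.polyForm x y ≤ ∑ _e : Fin N, (1:ℝ) := by
    apply Finset.sum_le_sum
    intro e _
    calc (∏ u ∈ G.tail e, x u) * ∏ v ∈ G.head e, y v
        ≤ |(∏ u ∈ G.tail e, x u) * ∏ v ∈ G.head e, y v| := le_abs_self _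
      _ = (∏ u ∈ G.tail e, |x u|) * ∏ v ∈ G.head e, |y v| := by
          rw [abs_mul, Finset.abs_prod, Finset.abs_prod]
      _ ≤ 1 := by
          apply mul_le_one₀
          · exact Finset.prod_le_one (fun u _ => abs_nonneg _) (fun u _ => abs_le_one hp hx u)
          · exact Finset.prod_nonneg fun v _ => abs_nonneg _
          · exact Finset.prod_le_one (fun v _ => abs_nonneg _) (fun v _ => abs_le_one hq hy v)
  simpa using this

lemma bddAbove_specSet {p q : ℝ} (hp : 0 < p) (hq : 0 < q) :
    BddAbove {z | ∃ x y, pnorm p x = 1 ∧ pnorm q y = 1 ∧ z = G.polyForm x y} := by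
  refine ⟨N, ?_⟩
  rintro z ⟨x, y, hx, hy, rfl⟩
  exact polyForm_le_card G hp hq (sum_eq_one hp hx) (sum_eq_one hq hy)

lemma specRad_pos (hm : 0 < m) (hn : 0 < n) (hN : 0 < N)
    {p q : ℝ} (hp : 0 < p) (hq : 0 < q) : 0 < G.specRad p q := by
  have hm' : (0:ℝ) < m := by exact_mod_cast hm
  have hn' : (0:ℝ) < n := by exact_mod_cast hn
  set c : ℝ := (m:ℝ) ^ (-(1/p)) with hc
  set d : ℝ := (n:ℝ) ^ (-(1/q)) with hd
  have hcpos : 0 < c := Real.rpow_pos_of_pos hm' _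
  have hdpos : 0 < d := Real.rpow_pos_of_pos hn' _
  have hxs : ∑ i : Fin m, |(fun _ : Fin m => c) i| ^ p = 1 := by
    simp only [abs_of_pos hcpos]
    rw [Finset.sum_const, Finset.card_univ, Fintype.card_fin, hc,
      ← Real.rpow_mul hm'.le, show -(1/p) * p = -1 by field_simp, Real.rpow_neg_one,
      nsmul_eq_mul]
    field_simp
  have hys : ∑ i : Fin n, |(fun _ : Fin n => d) i| ^ q = 1 := by
    simp only [abs_of_pos hdpos]
    rw [Finset.sum_const, Finset.card_univ, Fintype.card_fin, hd,
      ← Real.rpow_mul hn'.le, show -(1/q) * q = -1 by field_simp, Real.rpow_neg_one,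
      nsmul_eq_mul]
    field_simp
  have hmem : G.polyForm (fun _ => c) (fun _ => d) ∈
      {z | ∃ x y, pnorm p x = 1 ∧ pnorm q y = 1 ∧ z = G.polyForm x y} :=
    ⟨_, _, pnorm_eq_one hxs, pnorm_eq_one hys, rfl⟩
  have hNne : Nonempty (Fin N) := ⟨⟨0, hN⟩⟩
  have hpos : 0 < G.polyForm (fun _ => c) (fun _ => d) := by
    rw [polyForm]
    apply Finset.sum_pos
    · intro e _
      exact mul_pos (Finset.prod_pos fun u _ => hcpos) (Finset.prod_pos fun v _ => hdpos)
    · exact Finset.univ_nonempty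
  exact lt_of_lt_of_le hpos (le_csSup (bddAbove_specSet G hp hq) hmem)


lemma scaled_sum {k : ℕ} {p a : ℝ} (ha : a ≠ 0) {x : Fin k → ℝ}
    (h : ∑ i, |x i| ^ p = 1) :
    ∑ i, |(fun i => |x i| ^ (p / a)) i| ^ a = 1 := by
  have he : ∀ i : Fin k, |(|x i| ^ (p / a))| ^ a = |x i| ^ p := fun i => by
    rw [abs_of_nonneg (Real.rpow_nonneg (abs_nonneg _) _),
      ← Real.rpow_mul (abs_nonneg _), div_mul_cancel₀ _ ha]
  simp only [he]
  exact h

lemma specRad_interp (hm : 0 < m) (hn : 0 < n)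
    {p₁ q₁ p₂ q₂ p q μ : ℝ}
    (hp₁ : 0 < p₁) (hq₁ : 0 < q₁) (hp₂ : 0 < p₂) (hq₂ : 0 < q₂)
    (hμ0 : 0 < μ) (hμ1 : μ < 1)
    (hp0 : 0 < p) (hq0 : 0 < q)
    (hp : 1 / p = μ * (1 / p₁) + (1 - μ) * (1 / p₂))
    (hq : 1 / q = μ * (1 / q₁) + (1 - μ) * (1 / q₂))
    (hl1 : 0 ≤ G.specRad p₁ q₁) (hl2 : 0 ≤ G.specRad p₂ q₂) :
    G.specRad p q ≤ G.specRad p₁ q₁ ^ μ * G.specRad p₂ q₂ ^ (1 - μ) := by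
  apply Real.sSup_le _ (mul_nonneg (Real.rpow_nonneg hl1 _) (Real.rpow_nonneg hl2 _))
  rintro z ⟨x, y, hx, hy, rfl⟩
  have hxs := sum_eq_one hp0 hx
  have hys := sum_eq_one hq0 hy
  set x₁ : Fin m → ℝ := fun i => |x i| ^ (p / p₁) with hx₁def
  set x₂ : Fin m → ℝ := fun i => |x i| ^ (p / p₂) with hx₂def
  set y₁ : Fin n → ℝ := fun i => |y i| ^ (q / q₁) with hy₁def
  set y₂ : Fin n → ℝ := fun i => |y i| ^ (q / q₂) with hy₂def
  have hx₁nn : ∀ i, 0 ≤ x₁ i := fun i => Real.rpow_nonneg (abs_nonneg _) _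
  have hx₂nn : ∀ i, 0 ≤ x₂ i := fun i => Real.rpow_nonneg (abs_nonneg _) _
  have hy₁nn : ∀ i, 0 ≤ y₁ i := fun i => Real.rpow_nonneg (abs_nonneg _) _
  have hy₂nn : ∀ i, 0 ≤ y₂ i := fun i => Real.rpow_nonneg (abs_nonneg _) _
  have hx₁s : ∑ i, |x₁ i| ^ p₁ = 1 := scaled_sum hp₁.ne' hxs
  have hx₂s : ∑ i, |x₂ i| ^ p₂ = 1 := scaled_sum hp₂.ne' hxs
  have hy₁s : ∑ i, |y₁ i| ^ q₁ = 1 := scaled_sum hq₁.ne' hys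
  have hy₂s : ∑ i, |y₂ i| ^ q₂ = 1 := scaled_sum hq₂.ne' hys
  -- exponent identities
  have hexp : p / p₁ * μ + p / p₂ * (1 - μ) = 1 := by
    have h2 : p * (1/p) = 1 := by field_simp
    calc p / p₁ * μ + p / p₂ * (1 - μ) = p * (μ * (1/p₁) + (1-μ) * (1/p₂)) := by ring
      _ = p * (1/p) := by rw [← hp]
      _ = 1 := h2
  have hexq : q / q₁ * μ + q / q₂ * (1 - μ) = 1 := by
    have h2 : q * (1/q) = 1 := by field_simp
    calc q / q₁ * μ + q / q₂ * (1 - μ) = q * (μ * (1/q₁) + (1-μ) * (1/q₂)) := by ring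
      _ = q * (1/q) := by rw [← hq]
      _ = 1 := h2
  -- pointwise decomposition
  have hxdec : ∀ i, |x i| = x₁ i ^ μ * x₂ i ^ (1 - μ) := by
    intro i
    rcases eq_or_lt_of_le (abs_nonneg (x i)) with h0 | h0
    · rw [hx₁def, hx₂def]
      simp only [← h0]
      rw [Real.zero_rpow (by positivity : p / p₁ ≠ 0),
        Real.zero_rpow hμ0.ne', zero_mul]
    · rw [hx₁def, hx₂def]
      simp only
      rw [← Real.rpow_mul (abs_nonneg _), ← Real.rpow_mul (abs_nonneg _),
        ← Real.rpow_add h0, hexp, Real.rpow_one]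
  have hydec : ∀ i, |y i| = y₁ i ^ μ * y₂ i ^ (1 - μ) := by
    intro i
    rcases eq_or_lt_of_le (abs_nonneg (y i)) with h0 | h0
    · rw [hy₁def, hy₂def]
      simp only [← h0]
      rw [Real.zero_rpow (by positivity : q / q₁ ≠ 0),
        Real.zero_rpow hμ0.ne', zero_mul]
    · rw [hy₁def, hy₂def]
      simp only
      rw [← Real.rpow_mul (abs_nonneg _), ← Real.rpow_mul (abs_nonneg _),
        ← Real.rpow_add h0, hexq, Real.rpow_one]
  -- the two comparison forms
  set A : Fin N → ℝ := fun e => (∏ u ∈ G.tail e, x₁ u) * ∏ v ∈ G.head e, y₁ v with hA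
  set B : Fin N → ℝ := fun e => (∏ u ∈ G.tail e, x₂ u) * ∏ v ∈ G.head e, y₂ v with hB
  have hAnn : ∀ e, 0 ≤ A e := fun e =>
    mul_nonneg (Finset.prod_nonneg fun u _ => hx₁nn u) (Finset.prod_nonneg fun v _ => hy₁nn v)
  have hBnn : ∀ e, 0 ≤ B e := fun e =>
    mul_nonneg (Finset.prod_nonneg fun u _ => hx₂nn u) (Finset.prod_nonneg fun v _ => hy₂nn v)
  have hterm : ∀ e, (∏ u ∈ G.tail e, x u) * ∏ v ∈ G.head e, y v ≤ A e ^ μ * B e ^ (1-μ) := by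
    intro e
    calc (∏ u ∈ G.tail e, x u) * ∏ v ∈ G.head e, y v
        ≤ |(∏ u ∈ G.tail e, x u) * ∏ v ∈ G.head e, y v| := le_abs_self _
      _ = (∏ u ∈ G.tail e, |x u|) * ∏ v ∈ G.head e, |y v| := by
          rw [abs_mul, Finset.abs_prod, Finset.abs_prod]
      _ = (∏ u ∈ G.tail e, x₁ u ^ μ * x₂ u ^ (1-μ)) *
            ∏ v ∈ G.head e, y₁ v ^ μ * y₂ v ^ (1-μ) :=
          congrArg₂ (· * ·) (Finset.prod_congr rfl fun u _ => hxdec u)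
            (Finset.prod_congr rfl fun v _ => hydec v)
      _ = ((∏ u ∈ G.tail e, x₁ u) ^ μ * (∏ u ∈ G.tail e, x₂ u) ^ (1-μ)) *
            ((∏ v ∈ G.head e, y₁ v) ^ μ * (∏ v ∈ G.head e, y₂ v) ^ (1-μ)) := by
          rw [Finset.prod_mul_distrib, Finset.prod_mul_distrib,
            Real.finset_prod_rpow _ _ (fun u _ => hx₁nn u) μ,
            Real.finset_prod_rpow _ _ (fun u _ => hx₂nn u) (1-μ),
            Real.finset_prod_rpow _ _ (fun v _ => hy₁nn v) μ,
            Real.finset_prod_rpow _ _ (fun v _ => hy₂nn v) (1-μ)]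
      _ = A e ^ μ * B e ^ (1-μ) := by
          rw [hA, hB]
          simp only
          rw [Real.mul_rpow (Finset.prod_nonneg fun u _ => hx₁nn u)
              (Finset.prod_nonneg fun v _ => hy₁nn v),
            Real.mul_rpow (Finset.prod_nonneg fun u _ => hx₂nn u)
              (Finset.prod_nonneg fun v _ => hy₂nn v)]
          ring
  -- Hölder
  have hconj : Real.HolderConjugate (1/μ) (1/(1-μ)) := by
    constructor
    · rw [one_div, inv_inv, one_div, inv_inv, inv_one]; ring
    · exact one_div_pos.mpr hμ0
    · exact one_div_pos.mpr (by linarith)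
  have hold := Real.inner_le_Lp_mul_Lq_of_nonneg (s := Finset.univ)
    (f := fun e => A e ^ μ) (g := fun e => B e ^ (1-μ)) hconj
    (fun e _ => Real.rpow_nonneg (hAnn e) _) (fun e _ => Real.rpow_nonneg (hBnn e) _)
  have hsA : ∀ e : Fin N, (A e ^ μ) ^ (1/μ) = A e := fun e => by
    rw [← Real.rpow_mul (hAnn e), mul_one_div_cancel hμ0.ne', Real.rpow_one]
  have hsB : ∀ e : Fin N, (B e ^ (1-μ)) ^ (1/(1-μ)) = B e := fun e => by
    rw [← Real.rpow_mul (hBnn e), mul_one_div_cancel (by linarith : (1:ℝ) - μ ≠ 0),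
      Real.rpow_one]
  rw [show (1:ℝ) / (1/μ) = μ from one_div_one_div μ,
    show (1:ℝ) / (1/(1-μ)) = 1-μ from one_div_one_div (1-μ)] at hold
  simp only [hsA, hsB] at hold
  have hzle : G.polyForm x y ≤ (∑ e, A e) ^ μ * (∑ e, B e) ^ (1-μ) := by
    calc G.polyForm x y ≤ ∑ e, A e ^ μ * B e ^ (1-μ) :=
          Finset.sum_le_sum fun e _ => hterm e
      _ ≤ (∑ e, A e) ^ μ * (∑ e, B e) ^ (1-μ) := hold
  have hA1 : ∑ e, A e ≤ G.specRad p₁ q₁ :=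
    le_csSup (bddAbove_specSet G hp₁ hq₁)
      ⟨x₁, y₁, pnorm_eq_one hx₁s, pnorm_eq_one hy₁s, rfl⟩
  have hB1 : ∑ e, B e ≤ G.specRad p₂ q₂ :=
    le_csSup (bddAbove_specSet G hp₂ hq₂)
      ⟨x₂, y₂, pnorm_eq_one hx₂s, pnorm_eq_one hy₂s, rfl⟩
  calc G.polyForm x y ≤ (∑ e, A e) ^ μ * (∑ e, B e) ^ (1-μ) := hzle
    _ ≤ G.specRad p₁ q₁ ^ μ * G.specRad p₂ q₂ ^ (1-μ) := by
        apply mul_le_mul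
        · exact Real.rpow_le_rpow (Finset.sum_nonneg fun e _ => hAnn e) hA1 hμ0.le
        · exact Real.rpow_le_rpow (Finset.sum_nonneg fun e _ => hBnn e) hB1 (by linarith)
        · exact Real.rpow_nonneg (Finset.sum_nonneg fun e _ => hBnn e) _
        · exact Real.rpow_nonneg hl1 _

end SpecAux

/-- In the elliptic phase, `log λ_{p,q}(G)` is a convex function of `(1/p, 1/q)`:
if `(1/p, 1/q) = μ (1/p₁, 1/q₁) + (1−μ)(1/p₂, 1/q₂)` with `0 ≤ μ ≤ 1`, then
`log λ_{p,q}(G) ≤ μ log λ_{p₁,q₁}(G) + (1−μ) log λ_{p₂,q₂}(G)`. -/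
theorem specRad_log_convex (m n N r s : ℕ)
    (G : DirectedHypergraph m n N r s) (p₁ q₁ p₂ q₂ p q μ : ℝ)
    (hp₁ : 1 ≤ p₁) (hq₁ : 1 ≤ q₁) (hp₂ : 1 ≤ p₂) (hq₂ : 1 ≤ q₂)
    (he₁ : (r : ℝ) / p₁ + (s : ℝ) / q₁ < 1)
    (he₂ : (r : ℝ) / p₂ + (s : ℝ) / q₂ < 1)
    (hμ0 : 0 ≤ μ) (hμ1 : μ ≤ 1)
    (hp : 1 / p = μ * (1 / p₁) + (1 - μ) * (1 / p₂))
    (hq : 1 / q = μ * (1 / q₁) + (1 - μ) * (1 / q₂)) :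
    Real.log (G.specRad p q) ≤
      μ * Real.log (G.specRad p₁ q₁) +
        (1 - μ) * Real.log (G.specRad p₂ q₂) := by
  have hp₁0 : 0 < p₁ := by linarith
  have hq₁0 : 0 < q₁ := by linarith
  have hp₂0 : 0 < p₂ := by linarith
  have hq₂0 : 0 < q₂ := by linarith
  rcases eq_or_lt_of_le hμ0 with hμ | hμ
  · -- μ = 0
    have hpp : p = p₂ := by
      have h1 : 1 / p = 1 / p₂ := by rw [hp, ← hμ]; ring
      calc p = 1 / (1 / p) := (one_div_one_div p).symm
        _ = 1 / (1 / p₂) := by rw [h1]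
        _ = p₂ := one_div_one_div p₂
    have hqq : q = q₂ := by
      have h1 : 1 / q = 1 / q₂ := by rw [hq, ← hμ]; ring
      calc q = 1 / (1 / q) := (one_div_one_div q).symm
        _ = 1 / (1 / q₂) := by rw [h1]
        _ = q₂ := one_div_one_div q₂
    rw [hpp, hqq, ← hμ]
    ring_nf
    exact le_refl _
  rcases eq_or_lt_of_le hμ1 with hμ' | hμ'
  · -- μ = 1
    have hpp : p = p₁ := by
      have h1 : 1 / p = 1 / p₁ := by rw [hp, hμ']; ring
      calc p = 1 / (1 / p) := (one_div_one_div p).symm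
        _ = 1 / (1 / p₁) := by rw [h1]
        _ = p₁ := one_div_one_div p₁
    have hqq : q = q₁ := by
      have h1 : 1 / q = 1 / q₁ := by rw [hq, hμ']; ring
      calc q = 1 / (1 / q) := (one_div_one_div q).symm
        _ = 1 / (1 / q₁) := by rw [h1]
        _ = q₁ := one_div_one_div q₁
    rw [hpp, hqq, hμ']
    ring_nf
    exact le_refl _
  -- now 0 < μ < 1
  have hp0 : 0 < p := by
    have h1 : 0 < 1 / p := by
      rw [hp]
      have h2 : 0 < μ * (1 / p₁) := mul_pos hμ (by positivity)
      have h3 : 0 ≤ (1 - μ) * (1 / p₂) := mul_nonneg (by linarith) (by positivity)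
      linarith
    exact one_div_pos.mp h1
  have hq0 : 0 < q := by
    have h1 : 0 < 1 / q := by
      rw [hq]
      have h2 : 0 < μ * (1 / q₁) := mul_pos hμ (by positivity)
      have h3 : 0 ≤ (1 - μ) * (1 / q₂) := mul_nonneg (by linarith) (by positivity)
      linarith
    exact one_div_pos.mp h1
  rcases Nat.eq_zero_or_pos m with hm | hm
  · -- m = 0 : every specRad is 0
    subst hm
    have hzero : ∀ p' q' : ℝ, 0 < p' → G.specRad p' q' = 0 := by
      intro p' q' hp'
      have hset : {z | ∃ x y, DirectedHypergraph.pnorm p' x = 1 ∧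
          DirectedHypergraph.pnorm q' y = 1 ∧ z = G.polyForm x y} = ∅ := by
        ext z
        simp only [Set.mem_setOf_eq, Set.mem_empty_iff_false, iff_false]
        rintro ⟨x, y, hx, -, -⟩
        rw [DirectedHypergraph.pnorm] at hx
        simp only [Finset.univ_eq_empty, Finset.sum_empty] at hx
        rw [Real.zero_rpow (by positivity : 1 / p' ≠ 0)] at hx
        exact zero_ne_one hx
      rw [DirectedHypergraph.specRad, hset, Real.sSup_empty]
    rw [hzero p q hp0, hzero p₁ q₁ hp₁0, hzero p₂ q₂ hp₂0, Real.log_zero]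
    simp
  rcases Nat.eq_zero_or_pos n with hn | hn
  · subst hn
    have hzero : ∀ p' q' : ℝ, 0 < q' → G.specRad p' q' = 0 := by
      intro p' q' hq'
      have hset : {z | ∃ x y, DirectedHypergraph.pnorm p' x = 1 ∧
          DirectedHypergraph.pnorm q' y = 1 ∧ z = G.polyForm x y} = ∅ := by
        ext z
        simp only [Set.mem_setOf_eq, Set.mem_empty_iff_false, iff_false]
        rintro ⟨x, y, -, hy, -⟩
        rw [DirectedHypergraph.pnorm] at hy
        simp only [Finset.univ_eq_empty, Finset.sum_empty] at hy
        rw [Real.zero_rpow (by positivity : 1 / q' ≠ 0)] at hy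
        exact zero_ne_one hy
      rw [DirectedHypergraph.specRad, hset, Real.sSup_empty]
    rw [hzero p q hq0, hzero p₁ q₁ hq₁0, hzero p₂ q₂ hq₂0, Real.log_zero]
    simp
  rcases Nat.eq_zero_or_pos N with hN | hN
  · -- N = 0 : the form is identically zero
    subst hN
    have hzero : ∀ p' q' : ℝ, G.specRad p' q' = 0 := by
      intro p' q'
      apply le_antisymm
      · exact Real.sSup_nonpos (by
          rintro z ⟨x, y, -, -, rfl⟩
          simp [DirectedHypergraph.polyForm])
      · exact Real.sSup_nonneg (by
          rintro z ⟨x, y, -, -, rfl⟩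
          simp [DirectedHypergraph.polyForm])
    rw [hzero p q, hzero p₁ q₁, hzero p₂ q₂, Real.log_zero]
    simp
  -- main case
  have hl1 : 0 < G.specRad p₁ q₁ := SpecAux.specRad_pos G hm hn hN hp₁0 hq₁0
  have hl2 : 0 < G.specRad p₂ q₂ := SpecAux.specRad_pos G hm hn hN hp₂0 hq₂0
  have hl : 0 < G.specRad p q := SpecAux.specRad_pos G hm hn hN hp0 hq0
  have key := SpecAux.specRad_interp G hm hn hp₁0 hq₁0 hp₂0 hq₂0 hμ hμ' hp0 hq0 hp hq
    hl1.le hl2.le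
  calc Real.log (G.specRad p q)
      ≤ Real.log (G.specRad p₁ q₁ ^ μ * G.specRad p₂ q₂ ^ (1 - μ)) :=
        Real.log_le_log hl key
    _ = μ * Real.log (G.specRad p₁ q₁) + (1 - μ) * Real.log (G.specRad p₂ q₂) := by
        rw [Real.log_mul (Real.rpow_pos_of_pos hl1 _).ne' (Real.rpow_pos_of_pos hl2 _).ne',
          Real.log_rpow hl1, Real.log_rpow hl2]
end
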